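/- Let S be a ditopological Clifford semigroup whose maximal semilattice E is a U-semilattice, and let A be a countable U-dense subset of E. Then S is metrizable by a subinvariant metric (a metric d generating the topology of S with max{d(zx,zy), d(xz,yz)} ≤ d(x,y) = d(x⁻¹,y⁻¹) for all x,y,z ∈ S) if and only if E is metrizable by a subinvariant metric and every maximal subgroup H_e, e ∈ A, is first countable and balanced. -/

import Mathlib

set_option linter.unusedSectionVars false
set_option maxHeartbeats 1000000


open Topology TopologicalSpace

/-- `S`, together with the inversion `⁻¹`, is a topological Clifford semigroup:
a Hausdorff topological semigroup in which every `x` has a unique inverse `x⁻¹`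
(`x*x⁻¹*x = x`, `x⁻¹*x*x⁻¹ = x⁻¹`) commuting with `x`, the inversion being
continuous. -/
def IsTopologicalCliffordSemigroup (S : Type u) [Semigroup S] [TopologicalSpace S]
    [Inv S] : Prop :=
  T2Space S ∧ ContinuousMul S ∧ Continuous (fun x : S => x⁻¹) ∧
  (∀ x : S, x * x⁻¹ * x = x ∧ x⁻¹ * x * x⁻¹ = x⁻¹ ∧ x * x⁻¹ = x⁻¹ * x) ∧
  (∀ x y : S, x * y * x = x → y * x * y = y → y = x⁻¹)

/-- The set of idempotents (the maximal semilattice) of a semigroup `S`. -/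
def idempotents (S : Type u) [Mul S] : Set S := {x : S | x * x = x}

/-- The projection of a Clifford semigroup onto its maximal semilattice,
`π(x) = x * x⁻¹`. -/
def cliffordProj {S : Type u} [Mul S] [Inv S] (x : S) : S := x * x⁻¹

/-- The maximal semilattice `E` of `S` (with its subspace topology) is a
*U-semilattice*: for every open `U ⊆ E` and every `x ∈ U` there is `y ∈ U` with
`y ≪ x`, i.e. `x` belongs to the interior (in `E`) of the upper cone
`↑y = {f ∈ E : y * f = y}` of `y`. -/
def IdempotentsAreUSemilattice (S : Type u) [Semigroup S] [TopologicalSpace S] : Prop :=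
  ∀ U : Set ↥(idempotents S), IsOpen U → ∀ x ∈ U,
    ∃ y ∈ U, x ∈ interior {f : ↥(idempotents S) | (y : S) * (f : S) = (y : S)}

/-- A subset `A` of the maximal semilattice `E` of `S` is *U-dense* in `E` if for every
`x ∈ E` and every neighborhood `O` of `x` in `E` there is `e ∈ O ∩ A` with `e ≪ x`. -/
def IsUDenseInIdempotents (S : Type u) [Semigroup S] [TopologicalSpace S]
    (A : Set S) : Prop :=
  ∀ x : ↥(idempotents S), ∀ O ∈ nhds x,
    ∃ e : ↥(idempotents S), (e : S) ∈ A ∧ e ∈ O ∧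
      x ∈ interior {f : ↥(idempotents S) | (e : S) * (f : S) = (e : S)}

/-- A topological Clifford semigroup `S` is *ditopological* if for every `x ∈ S` and
every neighborhood `O` of `x` there are a neighborhood `U` of `x` in `S` and a
neighborhood `W ⊆ E` of `π(x)` in the subspace topology of the maximal semilattice `E`
such that `(U ÷ W) ∩ π⁻¹(W) ⊆ O`, where `U ÷ W = {z : ∃ b ∈ U, ∃ a ∈ W, b = z * a}`. -/
def Ditopological (S : Type u) [Semigroup S] [TopologicalSpace S] [Inv S] : Prop :=
  ∀ x : S, ∀ O ∈ nhds x, ∃ U ∈ nhds x, ∃ W : Set S,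
    W ⊆ idempotents S ∧ W ∈ nhdsWithin (cliffordProj x) (idempotents S) ∧
    {z : S | ∃ b ∈ U, ∃ a ∈ W, b = z * a} ∩ cliffordProj ⁻¹' W ⊆ O

/-- `d` is a metric on `X` generating its topology. -/
def IsCompatibleMetric {X : Type u} [TopologicalSpace X] (d : X → X → ℝ) : Prop :=
  (∀ x y : X, d x y = 0 ↔ x = y) ∧ (∀ x y : X, d x y = d y x) ∧
  (∀ x y z : X, d x z ≤ d x y + d y z) ∧
  (∀ s : Set X, IsOpen s ↔ ∀ x ∈ s, ∃ ε > 0, {y : X | d x y < ε} ⊆ s)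

/-- The maximal subgroup `H_e = π⁻¹(e)` of `S` (a topological group with identity `e`,
in the subspace topology) is *balanced*: every neighborhood `U` of the identity `e`
in `H_e` contains a neighborhood `V` of `e` with `x V x⁻¹ = V` for all `x ∈ H_e`. -/
def IsBalancedMaximalSubgroup (S : Type u) [Semigroup S] [TopologicalSpace S] [Inv S]
    (e : S) : Prop :=
  ∀ U : Set S, U ⊆ cliffordProj ⁻¹' {e} → U ∈ nhdsWithin e (cliffordProj ⁻¹' {e}) →
    ∃ V : Set S, V ⊆ U ∧ V ∈ nhdsWithin e (cliffordProj ⁻¹' {e}) ∧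
      ∀ x ∈ cliffordProj ⁻¹' {e}, (fun v : S => x * v * x⁻¹) '' V = V


section Alg
variable {S : Type u} [Semigroup S] [Inv S]
variable (h4 : ∀ x : S, x * x⁻¹ * x = x ∧ x⁻¹ * x * x⁻¹ = x⁻¹ ∧ x * x⁻¹ = x⁻¹ * x)
variable (h5 : ∀ x y : S, x * y * x = x → y * x * y = y → y = x⁻¹)

section
include h4 h5

lemma cs_inv_inv (x : S) : x⁻¹⁻¹ = x :=
  ((h5 x⁻¹ x (h4 x).2.1 (h4 x).1)).symm

lemma cs_idem_inv {e : S} (he : e * e = e) : e⁻¹ = e :=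
  (h5 e e (by rw [he, he]) (by rw [he, he])).symm

lemma cs_proj_idem (x : S) : (x * x⁻¹) * (x * x⁻¹) = x * x⁻¹ := by
  calc (x * x⁻¹) * (x * x⁻¹) = (x * x⁻¹ * x) * x⁻¹ := by simp only [mul_assoc]
  _ = x * x⁻¹ := by rw [(h4 x).1]

lemma cs_proj_idem' (x : S) : (x⁻¹ * x) * (x⁻¹ * x) = x⁻¹ * x := by
  rw [← (h4 x).2.2]; exact cs_proj_idem h4 h5 x

/-- product of idempotents is idempotent -/
lemma cs_idem_mul_idem {e f : S} (he : e * e = e) (hf : f * f = f) :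
    (e * f) * (e * f) = e * f := by
  set g := (e * f)⁻¹ with hg
  have k1 : (e * f) * (f * g * e) * (e * f) = e * f := by
    calc (e * f) * (f * g * e) * (e * f) = e * (f * f) * g * (e * e) * f := by
          simp only [mul_assoc]
    _ = (e * f) * g * (e * f) := by rw [hf, he]; simp only [mul_assoc]
    _ = e * f := (h4 (e * f)).1
  have k2 : (f * g * e) * (e * f) * (f * g * e) = f * g * e := by
    calc (f * g * e) * (e * f) * (f * g * e) = f * (g * (e * e) * (f * f) * g) * e := by
          simp only [mul_assoc]
    _ = f * (g * (e * f) * g) * e := by rw [he, hf]; simp only [mul_assoc]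
    _ = f * g * e := by rw [(h4 (e * f)).2.1]
  have hge : f * g * e = g := h5 (e * f) (f * g * e) k1 k2
  have hgg : g * g = g := by
    conv_lhs => rw [← hge]
    calc (f * g * e) * (f * g * e) = f * (g * (e * f) * g) * e := by simp only [mul_assoc]
    _ = f * g * e := by rw [(h4 (e * f)).2.1]
    _ = g := hge
  have hefg : e * f = g := by
    have h1 := cs_inv_inv h4 h5 (e * f)
    rw [← h1, ← hg, cs_idem_inv h4 h5 hgg]
  rw [hefg, hgg]

/-- idempotents commute -/
lemma cs_idem_comm {e f : S} (he : e * e = e) (hf : f * f = f) : e * f = f * e := by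
  have hef := cs_idem_mul_idem h4 h5 he hf
  have hfe := cs_idem_mul_idem h4 h5 hf he
  have k3 : (e * f) * (f * e) * (e * f) = e * f := by
    calc (e * f) * (f * e) * (e * f) = e * (f * f) * (e * e) * f := by simp only [mul_assoc]
    _ = (e * f) * (e * f) := by rw [hf, he]; simp only [mul_assoc]
    _ = e * f := hef
  have k4 : (f * e) * (e * f) * (f * e) = f * e := by
    calc (f * e) * (e * f) * (f * e) = f * (e * e) * (f * f) * e := by simp only [mul_assoc]
    _ = (f * e) * (f * e) := by rw [he, hf]; simp only [mul_assoc]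
    _ = f * e := hfe
  have h6 : f * e = (e * f)⁻¹ := h5 (e * f) (f * e) k3 k4
  have h7 : (e * f)⁻¹ = e * f := cs_idem_inv h4 h5 hef
  rw [h6, h7]

/-- the inverse of `x*e` for an idempotent `e` is `e*x⁻¹`. -/
lemma cs_mul_idem_inv {e : S} (he : e * e = e) (x : S) : e * x⁻¹ = (x * e)⁻¹ := by
  have hf2 : (x⁻¹ * x) * (x⁻¹ * x) = x⁻¹ * x := cs_proj_idem' h4 h5 x
  have hcomm : e * (x⁻¹ * x) = (x⁻¹ * x) * e := cs_idem_comm h4 h5 he hf2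
  apply h5
  · calc (x * e) * (e * x⁻¹) * (x * e)
        = x * (e * e) * (x⁻¹ * x) * e := by simp only [mul_assoc]
    _ = x * e * (x⁻¹ * x) * e := by rw [he]
    _ = x * ((x⁻¹ * x) * e) * e := by rw [mul_assoc x e (x⁻¹ * x), hcomm]
    _ = x * (x⁻¹ * x) * (e * e) := by simp only [mul_assoc]
    _ = x * (x⁻¹ * x) * e := by rw [he]
    _ = x * e := by rw [← mul_assoc x x⁻¹ x, (h4 x).1]
  · calc (e * x⁻¹) * (x * e) * (e * x⁻¹)
        = e * ((x⁻¹ * x) * (e * e)) * x⁻¹ := by simp only [mul_assoc]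
    _ = e * ((x⁻¹ * x) * e) * x⁻¹ := by rw [he]
    _ = e * (e * (x⁻¹ * x)) * x⁻¹ := by rw [hcomm]
    _ = (e * e) * ((x⁻¹ * x) * x⁻¹) := by simp only [mul_assoc]
    _ = e * x⁻¹ := by rw [he, (h4 x).2.1]

/-- idempotents are central -/
lemma cs_idem_central {e : S} (he : e * e = e) (x : S) : x * e = e * x := by
  have hf2 : (x⁻¹ * x) * (x⁻¹ * x) = x⁻¹ * x := cs_proj_idem' h4 h5 x
  have hcomm : e * (x⁻¹ * x) = (x⁻¹ * x) * e := cs_idem_comm h4 h5 he hf2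
  -- Clifford identity for x*e : (x*e)*(x*e)⁻¹ = (x*e)⁻¹*(x*e)
  have hB := (h4 (x * e)).2.2
  rw [← cs_mul_idem_inv h4 h5 he x] at hB
  -- hB : (x*e)*(e*x⁻¹) = (e*x⁻¹)*(x*e)
  have hL : (x * e) * (e * x⁻¹) = x * e * x⁻¹ := by
    calc (x * e) * (e * x⁻¹) = x * (e * e) * x⁻¹ := by simp only [mul_assoc]
    _ = x * e * x⁻¹ := by rw [he]
  have hR : (e * x⁻¹) * (x * e) = e * (x⁻¹ * x) := by
    calc (e * x⁻¹) * (x * e) = e * ((x⁻¹ * x) * e) := by simp only [mul_assoc]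
    _ = e * (e * (x⁻¹ * x)) := by rw [hcomm]
    _ = (e * e) * (x⁻¹ * x) := by rw [mul_assoc]
    _ = e * (x⁻¹ * x) := by rw [he]
  rw [hL, hR] at hB
  -- hB : x * e * x⁻¹ = e * (x⁻¹ * x)
  have key : x * e * (x⁻¹ * x) = e * (x⁻¹ * x) * x := by
    calc x * e * (x⁻¹ * x) = (x * e * x⁻¹) * x := by simp only [mul_assoc]
    _ = e * (x⁻¹ * x) * x := by rw [hB]
  have hfx : (x⁻¹ * x) * x = x := by rw [← (h4 x).2.2, (h4 x).1]
  calc x * e = x * (e * (x⁻¹ * x)) := by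
        rw [hcomm, ← mul_assoc x (x⁻¹ * x) e, ← mul_assoc x x⁻¹ x, (h4 x).1]
  _ = x * e * (x⁻¹ * x) := by rw [mul_assoc]
  _ = e * (x⁻¹ * x) * x := key
  _ = e * x := by rw [mul_assoc e (x⁻¹ * x) x, hfx]

end
end Alg

section Alg2
variable {S : Type u} [Semigroup S] [Inv S]
variable (h4 : ∀ x : S, x * x⁻¹ * x = x ∧ x⁻¹ * x * x⁻¹ = x⁻¹ ∧ x * x⁻¹ = x⁻¹ * x)
variable (h5 : ∀ x y : S, x * y * x = x → y * x * y = y → y = x⁻¹)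
include h4 h5

lemma cs_mul_inv_rev (x y : S) : (x * y)⁻¹ = y⁻¹ * x⁻¹ := by
  have hp : (y * y⁻¹) * (y * y⁻¹) = y * y⁻¹ := cs_proj_idem h4 h5 y
  have hq : (x⁻¹ * x) * (x⁻¹ * x) = x⁻¹ * x := cs_proj_idem' h4 h5 x
  have hpq : (y * y⁻¹) * (x⁻¹ * x) = (x⁻¹ * x) * (y * y⁻¹) := cs_idem_comm h4 h5 hp hq
  refine (h5 (x * y) (y⁻¹ * x⁻¹) ?_ ?_).symm
  · calc (x * y) * (y⁻¹ * x⁻¹) * (x * y)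
        = x * ((y * y⁻¹) * ((x⁻¹ * x) * y)) := by simp only [mul_assoc]
    _ = x * ((x⁻¹ * x) * ((y * y⁻¹) * y)) := by
        rw [← mul_assoc (y * y⁻¹) (x⁻¹ * x) y, hpq, mul_assoc]
    _ = x * ((x⁻¹ * x) * y) := by rw [(h4 y).1]
    _ = x * y := by rw [← mul_assoc x (x⁻¹ * x) y, ← mul_assoc x x⁻¹ x, (h4 x).1]
  · calc (y⁻¹ * x⁻¹) * (x * y) * (y⁻¹ * x⁻¹)
        = y⁻¹ * ((x⁻¹ * x) * ((y * y⁻¹) * x⁻¹)) := by simp only [mul_assoc]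
    _ = y⁻¹ * ((y * y⁻¹) * ((x⁻¹ * x) * x⁻¹)) := by
        rw [← mul_assoc (x⁻¹ * x) (y * y⁻¹) x⁻¹, ← hpq, mul_assoc]
    _ = y⁻¹ * ((y * y⁻¹) * x⁻¹) := by rw [(h4 x).2.1]
    _ = y⁻¹ * x⁻¹ := by rw [← mul_assoc y⁻¹ (y * y⁻¹) x⁻¹, ← mul_assoc y⁻¹ y y⁻¹, (h4 y).2.1]

lemma cs_proj_mul (x y : S) : (x * y) * (x * y)⁻¹ = (x * x⁻¹) * (y * y⁻¹) := by
  have hp : (y * y⁻¹) * (y * y⁻¹) = y * y⁻¹ := cs_proj_idem h4 h5 y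
  rw [cs_mul_inv_rev h4 h5 x y]
  calc (x * y) * (y⁻¹ * x⁻¹) = x * ((y * y⁻¹) * x⁻¹) := by simp only [mul_assoc]
  _ = x * (x⁻¹ * (y * y⁻¹)) := by rw [show (y * y⁻¹) * x⁻¹ = x⁻¹ * (y * y⁻¹) from
        (cs_idem_central h4 h5 hp x⁻¹).symm]
  _ = (x * x⁻¹) * (y * y⁻¹) := by rw [mul_assoc]

lemma cs_proj_inv (x : S) : x⁻¹ * x⁻¹⁻¹ = x * x⁻¹ := by
  rw [cs_inv_inv h4 h5, ← (h4 x).2.2]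

lemma cs_left_id {e a : S} (ha : a * a⁻¹ = e) : e * a = a := by
  rw [← ha, (h4 a).1]

lemma cs_right_id {e a : S} (ha : a * a⁻¹ = e) : a * e = a := by
  rw [← ha, (h4 a).2.2, ← mul_assoc, (h4 a).1]

lemma cs_inv_mem {e a : S} (ha : a * a⁻¹ = e) : a⁻¹ * a⁻¹⁻¹ = e := by
  rw [cs_proj_inv h4 h5, ha]

lemma cs_inv_mul {e a : S} (ha : a * a⁻¹ = e) : a⁻¹ * a = e := by
  rw [← (h4 a).2.2, ha]

lemma cs_mul_mem {e a b : S} (ha : a * a⁻¹ = e) (hb : b * b⁻¹ = e) :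
    (a * b) * (a * b)⁻¹ = e := by
  rw [cs_proj_mul h4 h5, ha, hb]
  have he : e * e = e := by rw [← ha]; exact cs_proj_idem h4 h5 a
  exact he

lemma cs_idem_proj {e : S} (he : e * e = e) : e * e⁻¹ = e := by
  rw [cs_idem_inv h4 h5 he, he]

end Alg2

section CompatMetric
variable {X : Type v} [TopologicalSpace X] {d : X → X → ℝ}

lemma cm_self (h : IsCompatibleMetric d) (x : X) : d x x = 0 := (h.1 x x).2 rfl

lemma cm_nonneg (h : IsCompatibleMetric d) (x y : X) : 0 ≤ d x y := by
  have t := h.2.2.1 x y x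
  rw [cm_self h, h.2.1 y x] at t
  linarith

lemma cm_ball_open (h : IsCompatibleMetric d) (x : X) (ε : ℝ) :
    IsOpen {y | d x y < ε} := by
  rw [h.2.2.2]
  intro y hy
  refine ⟨ε - d x y, by simpa using hy, fun z hz => ?_⟩
  have := h.2.2.1 x y z
  simp only [Set.mem_setOf_eq] at hz ⊢
  linarith

lemma cm_mem_nhds_iff (h : IsCompatibleMetric d) {x : X} {t : Set X} :
    t ∈ nhds x ↔ ∃ ε > 0, {y | d x y < ε} ⊆ t := by
  constructor
  · intro ht
    rcases mem_nhds_iff.1 ht with ⟨u, hut, hu, hxu⟩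
    rcases (h.2.2.2 u).1 hu x hxu with ⟨ε, hε, hb⟩
    exact ⟨ε, hε, hb.trans hut⟩
  · rintro ⟨ε, hε, hb⟩
    exact Filter.mem_of_superset
      ((cm_ball_open h x ε).mem_nhds (by simp [cm_self h, hε])) hb

lemma cm_ball_mem_nhds (h : IsCompatibleMetric d) (x : X) {ε : ℝ} (hε : 0 < ε) :
    {y | d x y < ε} ∈ nhds x :=
  (cm_mem_nhds_iff h).2 ⟨ε, hε, subset_rfl⟩

end CompatMetric

section Chain
open scoped NNReal Classical

variable {X : Type v}

lemma half_pow_le_half_pow {a b : ℕ} : ((2:ℝ≥0)⁻¹) ^ a ≤ (2⁻¹) ^ b ↔ b ≤ a := by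
  rw [inv_pow, inv_pow, inv_le_inv₀ (by positivity) (by positivity),
    pow_le_pow_iff_right₀ one_lt_two]

variable (T : ℕ → Set (X × X))

noncomputable def preD (x y : X) : ℝ≥0 :=
  if h : ∃ k, (x, y) ∉ T k then (2⁻¹ : ℝ≥0) ^ (Nat.find h - 1) else 0

variable (Trefl : ∀ k x, (x, x) ∈ T k)
variable (Tsymm : ∀ k x y, (x, y) ∈ T k → (y, x) ∈ T k)
variable (Tanti : ∀ k, T (k + 1) ⊆ T k)
variable (T0 : ∀ p, p ∈ T 0)

lemma Tanti' (Tanti : ∀ k, T (k + 1) ⊆ T k) {j k : ℕ} (h : j ≤ k) : T k ⊆ T j := by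
  induction k with
  | zero => simpa [Nat.le_zero.1 h]
  | succ n ih =>
    rcases Nat.lt_or_ge j (n+1) with hlt | hge
    · exact (Tanti n).trans (ih (Nat.lt_succ_iff.1 hlt))
    · have : j = n + 1 := le_antisymm h hge
      simp [this]

include Trefl in
lemma preD_self (x : X) : preD T x x = 0 := by
  rw [preD, dif_neg]
  push_neg
  exact fun k => Trefl k x

include Tanti in
lemma mem_T_iff_lt_find {x y : X} (h : ∃ k, (x, y) ∉ T k) {m : ℕ} :
    (x, y) ∈ T m ↔ m < Nat.find h := by
  constructor
  · intro hm
    by_contra hc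
    push_neg at hc
    exact (Nat.find_spec h) (Tanti' T Tanti hc hm)
  · intro hm
    have := Nat.find_min h hm
    simpa using this

include T0 in
lemma find_pos {x y : X} (h : ∃ k, (x, y) ∉ T k) : 1 ≤ Nat.find h := by
  rcases Nat.eq_zero_or_pos (Nat.find h) with h0 | h1
  · exact absurd (T0 (x, y)) (h0 ▸ Nat.find_spec h)
  · exact h1

include Tanti T0 in
lemma preD_le_pow_iff {x y : X} {m : ℕ} :
    preD T x y ≤ (2⁻¹ : ℝ≥0) ^ m ↔ (x, y) ∈ T m := by
  rw [preD]
  split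
  · next h =>
    rw [half_pow_le_half_pow, mem_T_iff_lt_find T Tanti h]
    have h1 := find_pos T T0 h
    omega
  · next h =>
    push_neg at h
    simp [h m]

include Tanti T0 in
lemma preD_eq_zero_iff {x y : X} : preD T x y = 0 ↔ ∀ k, (x, y) ∈ T k := by
  constructor
  · intro h k
    rw [← preD_le_pow_iff T Tanti T0, h]
    exact zero_le
  · intro h
    rw [preD, dif_neg]
    push_neg
    exact h

include Tsymm Tanti T0 in
lemma preD_comm (x y : X) : preD T x y = preD T y x := by
  have key : ∀ a b : X, preD T a b ≤ preD T b a := by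
    intro a b
    by_cases h : ∃ k, (b, a) ∉ T k
    · have h1 : preD T b a = (2⁻¹ : ℝ≥0) ^ (Nat.find h - 1) := dif_pos h
      rw [h1, preD_le_pow_iff T Tanti T0]
      exact Tsymm _ _ _ ((mem_T_iff_lt_find T Tanti h).2 (by have := find_pos T T0 h; omega))
    · push_neg at h
      have : ∀ k, (a, b) ∈ T k := fun k => Tsymm _ _ _ (h k)
      rw [(preD_eq_zero_iff T Tanti T0).2 this]
      exact zero_le
  exact le_antisymm (key x y) (key y x)

lemma preD_le_one (x y : X) : preD T x y ≤ 1 := by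
  rw [preD]
  split
  · exact pow_le_one₀ zero_le (by norm_num)
  · exact zero_le_one

include Tanti T0 in
lemma preD_shape {x y : X} (h : preD T x y ≠ 0) : ∃ j, preD T x y = (2⁻¹ : ℝ≥0) ^ j := by
  by_cases hex : ∃ k, (x, y) ∉ T k
  · rw [preD, dif_pos hex]
    exact ⟨_, rfl⟩
  · rw [preD, dif_neg hex] at h
    exact absurd rfl h

include Tanti T0 in
lemma preD_hd
    (Tcube : ∀ k x y z w, (x,y) ∈ T (k+1) → (y,z) ∈ T (k+1) → (z,w) ∈ T (k+1) → (x,w) ∈ T k)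
    (a b c e : X) :
    preD T a e ≤ 2 * max (preD T a b) (max (preD T b c) (preD T c e)) := by
  set M := max (preD T a b) (max (preD T b c) (preD T c e)) with hM
  have hab : preD T a b ≤ M := le_max_left _ _
  have hbc : preD T b c ≤ M := le_trans (le_max_left _ _) (le_max_right _ _)
  have hce : preD T c e ≤ M := le_trans (le_max_right _ _) (le_max_right _ _)
  by_cases hM0 : M = 0
  · have h0 : ∀ k, (a, e) ∈ T k := by
      intro k
      have h1 : (a, b) ∈ T (k+1) := (preD_eq_zero_iff T Tanti T0).1 (le_antisymm (hM0 ▸ hab) zero_le) _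
      have h2 : (b, c) ∈ T (k+1) := (preD_eq_zero_iff T Tanti T0).1 (le_antisymm (hM0 ▸ hbc) zero_le) _
      have h3 : (c, e) ∈ T (k+1) := (preD_eq_zero_iff T Tanti T0).1 (le_antisymm (hM0 ▸ hce) zero_le) _
      exact Tcube k a b c e h1 h2 h3
    rw [(preD_eq_zero_iff T Tanti T0).2 h0]
    exact zero_le
  · -- M is one of the three values, hence of the form 2⁻¹^j
    have hMval : ∃ j, M = (2⁻¹ : ℝ≥0) ^ j := by
      rcases max_cases (preD T a b) (max (preD T b c) (preD T c e)) with ⟨h1, _⟩ | ⟨h1, _⟩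
      · exact preD_shape T Tanti T0 (fun hz => hM0 (by rw [hM, h1, hz])) |>.imp
          (fun j hj => by rw [hM, h1, hj])
      · rcases max_cases (preD T b c) (preD T c e) with ⟨h2, _⟩ | ⟨h2, _⟩
        · exact preD_shape T Tanti T0 (fun hz => hM0 (by rw [hM, h1, h2, hz])) |>.imp
            (fun j hj => by rw [hM, h1, h2, hj])
        · exact preD_shape T Tanti T0 (fun hz => hM0 (by rw [hM, h1, h2, hz])) |>.imp
            (fun j hj => by rw [hM, h1, h2, hj])
    rcases hMval with ⟨j, hj⟩
    rcases j with _ | j'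
    · -- M = 1
      have : preD T a e ≤ 1 := preD_le_one T a e
      rw [hj]
      simpa using this.trans (by norm_num)
    · -- M = 2⁻¹^(j'+1)
      have h1 : (a, b) ∈ T (j'+1) := (preD_le_pow_iff T Tanti T0).1 (hj ▸ hab)
      have h2 : (b, c) ∈ T (j'+1) := (preD_le_pow_iff T Tanti T0).1 (hj ▸ hbc)
      have h3 : (c, e) ∈ T (j'+1) := (preD_le_pow_iff T Tanti T0).1 (hj ▸ hce)
      have h4 : (a, e) ∈ T j' := Tcube j' a b c e h1 h2 h3
      have h5 : preD T a e ≤ (2⁻¹ : ℝ≥0) ^ j' := (preD_le_pow_iff T Tanti T0).2 h4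
      refine h5.trans ?_
      rw [hj, pow_succ, ← mul_assoc]
      rw [show (2 : ℝ≥0) * (2⁻¹:ℝ≥0)^j' * 2⁻¹ = (2 * 2⁻¹) * (2⁻¹:ℝ≥0)^j' by ring,
        mul_inv_cancel₀ (two_ne_zero), one_mul]

end Chain

section ChainDist
open scoped NNReal Classical
variable {X : Type v}
variable (T : ℕ → Set (X × X))
variable (Trefl : ∀ k x, (x, x) ∈ T k)
variable (Tsymm : ∀ k x y, (x, y) ∈ T k → (y, x) ∈ T k)
variable (Tanti : ∀ k, T (k + 1) ⊆ T k)
variable (T0 : ∀ p, p ∈ T 0)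

lemma zipWith_sum_le {f g : X → X → ℝ≥0} (hfg : ∀ a b, f a b ≤ g a b) :
    ∀ (A B : List X), (List.zipWith f A B).sum ≤ (List.zipWith g A B).sum := by
  intro A
  induction A with
  | nil => intro B; simp
  | cons a A ih =>
    intro B
    cases B with
    | nil => simp
    | cons b B => simpa using add_le_add (hfg a b) (ih B)

/-- the chain distance associated to `T`. -/
noncomputable def chainDist (Trefl : ∀ k x, (x, x) ∈ T k)
    (Tsymm : ∀ k x y, (x, y) ∈ T k → (y, x) ∈ T k)
    (Tanti : ∀ k, T (k + 1) ⊆ T k) (T0 : ∀ p, p ∈ T 0) : X → X → ℝ :=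
  @dist X (@PseudoMetricSpace.toDist X
    (PseudoMetricSpace.ofPreNNDist (preD T) (preD_self T Trefl)
      (preD_comm T Tsymm Tanti T0)))

include Trefl Tsymm Tanti T0

lemma chainDist_self (x : X) : chainDist T Trefl Tsymm Tanti T0 x x = 0 :=
  @dist_self X (PseudoMetricSpace.ofPreNNDist (preD T) (preD_self T Trefl)
      (preD_comm T Tsymm Tanti T0)) x

lemma chainDist_comm (x y : X) :
    chainDist T Trefl Tsymm Tanti T0 x y = chainDist T Trefl Tsymm Tanti T0 y x :=
  @dist_comm X (PseudoMetricSpace.ofPreNNDist (preD T) (preD_self T Trefl)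
      (preD_comm T Tsymm Tanti T0)) x y

lemma chainDist_triangle (x y z : X) :
    chainDist T Trefl Tsymm Tanti T0 x z ≤
      chainDist T Trefl Tsymm Tanti T0 x y + chainDist T Trefl Tsymm Tanti T0 y z :=
  @dist_triangle X (PseudoMetricSpace.ofPreNNDist (preD T) (preD_self T Trefl)
      (preD_comm T Tsymm Tanti T0)) x y z

lemma chainDist_le_preD (x y : X) :
    chainDist T Trefl Tsymm Tanti T0 x y ≤ preD T x y :=
  PseudoMetricSpace.dist_ofPreNNDist_le _ _ _ x y

lemma preD_le_two_chainDist
    (Tcube : ∀ k x y z w, (x,y) ∈ T (k+1) → (y,z) ∈ T (k+1) → (z,w) ∈ T (k+1) → (x,w) ∈ T k)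
    (x y : X) :
    (preD T x y : ℝ) ≤ 2 * chainDist T Trefl Tsymm Tanti T0 x y :=
  PseudoMetricSpace.le_two_mul_dist_ofPreNNDist _ _ _
    (fun a b c e => preD_hd T Tanti T0 Tcube a b c e) x y

lemma chainDist_nonneg (x y : X) : 0 ≤ chainDist T Trefl Tsymm Tanti T0 x y :=
  @dist_nonneg X (PseudoMetricSpace.ofPreNNDist (preD T) (preD_self T Trefl)
      (preD_comm T Tsymm Tanti T0)) x y

/-- equivariance of the chain distance under maps preserving the entourages -/
lemma chainDist_map_le (θ : X → X)
    (hθ : ∀ k (p : X × X), p ∈ T k → (θ p.1, θ p.2) ∈ T k) (x y : X) :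
    chainDist T Trefl Tsymm Tanti T0 (θ x) (θ y) ≤ chainDist T Trefl Tsymm Tanti T0 x y := by
  have hpre : ∀ a b, preD T (θ a) (θ b) ≤ preD T a b := by
    intro a b
    by_cases hex : ∃ k, (a, b) ∉ T k
    · rw [show preD T a b = (2⁻¹:ℝ≥0) ^ (Nat.find hex - 1) from dif_pos hex,
        preD_le_pow_iff T Tanti T0]
      exact hθ _ _ ((mem_T_iff_lt_find T Tanti hex).2 (by have := find_pos T T0 hex; omega))
    · push_neg at hex
      have h0 : preD T (θ a) (θ b) = 0 :=
        (preD_eq_zero_iff T Tanti T0).2 (fun k => hθ _ _ (hex k))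
      rw [h0]
      exact zero_le
  unfold chainDist
  rw [PseudoMetricSpace.dist_ofPreNNDist, PseudoMetricSpace.dist_ofPreNNDist, NNReal.coe_le_coe]
  refine le_ciInf fun l => ?_
  refine le_trans (ciInf_le (OrderBot.bddBelow _) (l.map θ)) ?_
  have h1 : (θ x :: l.map θ) = (x :: l).map θ := by simp
  have h2 : (l.map θ ++ [θ y]) = (l ++ [y]).map θ := by simp
  rw [h1, h2, List.zipWith_map]
  exact zipWith_sum_le (f := fun a b => preD T (θ a) (θ b)) (g := preD T) hpre _ _

end ChainDist

section Main
open scoped NNReal Classical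

variable {S : Type u} [Semigroup S] [TopologicalSpace S] [Inv S]
variable (h4 : ∀ x : S, x * x⁻¹ * x = x ∧ x⁻¹ * x * x⁻¹ = x⁻¹ ∧ x * x⁻¹ = x⁻¹ * x)
variable (h5 : ∀ x y : S, x * y * x = x → y * x * y = y → y = x⁻¹)

/-- projection to the semilattice, as a map into the subtype -/
noncomputable def piE (h4 : ∀ x : S, x * x⁻¹ * x = x ∧ x⁻¹ * x * x⁻¹ = x⁻¹ ∧ x * x⁻¹ = x⁻¹ * x)
    (h5 : ∀ x y : S, x * y * x = x → y * x * y = y → y = x⁻¹) (x : S) :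
    ↥(idempotents S) :=
  ⟨x * x⁻¹, cs_proj_idem h4 h5 x⟩

/-- the open upper cone of `e` in the semilattice -/
def upcl (e : S) : Set ↥(idempotents S) :=
  interior {f : ↥(idempotents S) | e * ↑f = e}

/-- `hgt ρ e f` measures how deep `f` is inside the upper cone of `e`. -/
noncomputable def hgt (ρ : ↥(idempotents S) → ↥(idempotents S) → ℝ) (e : S)
    (f : ↥(idempotents S)) : ℝ :=
  if ((upcl e)ᶜ).Nonempty then
    min 1 (sInf ((fun k => ρ f k) '' (upcl e)ᶜ)) else 1

variable (ρ : ↥(idempotents S) → ↥(idempotents S) → ℝ)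
variable (e : S)

lemma hgt_img_bdd (hρ : IsCompatibleMetric ρ) (f : ↥(idempotents S)) :
    BddBelow ((fun k => ρ f k) '' (upcl e)ᶜ) := by
  refine ⟨0, fun v hv => ?_⟩
  rcases hv with ⟨k, _, rfl⟩
  exact cm_nonneg hρ _ _

lemma hgt_nonneg (hρ : IsCompatibleMetric ρ) (f : ↥(idempotents S)) : 0 ≤ hgt ρ e f := by
  rw [hgt]
  split
  · refine le_min zero_le_one (Real.sInf_nonneg ?_)
    rintro v ⟨k, _, rfl⟩
    exact cm_nonneg hρ _ _
  · exact zero_le_one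

lemma hgt_le_one (f : ↥(idempotents S)) : hgt ρ e f ≤ 1 := by
  rw [hgt]; split
  · exact min_le_left _ _
  · exact le_refl 1

lemma min_one_add {a b c : ℝ} (hc : 0 ≤ c) (h : a ≤ b + c) :
    min 1 a ≤ min 1 b + c := by
  rcases le_total 1 b with hb | hb
  · rw [min_eq_left hb]
    exact le_trans (min_le_left _ _) (by linarith)
  · rw [min_eq_right hb]
    exact le_trans (min_le_right _ _) h

lemma hgt_lip (hρ : IsCompatibleMetric ρ) (f f' : ↥(idempotents S)) :
    hgt ρ e f ≤ hgt ρ e f' + ρ f f' := by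
  rw [hgt, hgt]
  split
  · next hne =>
    refine min_one_add (cm_nonneg hρ _ _) ?_
    have hle : sInf ((fun k => ρ f k) '' (upcl e)ᶜ) - ρ f f' ≤
        sInf ((fun k => ρ f' k) '' (upcl e)ᶜ) := by
      refine le_csInf (hne.image _) ?_
      rintro v ⟨k, hk, rfl⟩
      have h1 : sInf ((fun k => ρ f k) '' (upcl e)ᶜ) ≤ ρ f k :=
        csInf_le (hgt_img_bdd ρ e hρ f) ⟨k, hk, rfl⟩
      have h2 : ρ f k ≤ ρ f f' + ρ f' k := hρ.2.2.1 _ _ _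
      linarith
    linarith
  · next hne =>
    have : 0 ≤ ρ f f' := cm_nonneg hρ _ _
    linarith

lemma hgt_pos_of_interior (hρ : IsCompatibleMetric ρ) {f : ↥(idempotents S)}
    (hf : f ∈ upcl e) : 0 < hgt ρ e f := by
  rw [hgt]
  split
  · next hne =>
    rcases (hρ.2.2.2 _).1 isOpen_interior f hf with ⟨ε, hε, hball⟩
    have hlb : ε ≤ sInf ((fun k => ρ f k) '' (upcl e)ᶜ) := by
      refine le_csInf (hne.image _) ?_
      rintro v ⟨k, hk, rfl⟩
      by_contra hc
      push_neg at hc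
      exact hk (hball hc)
    have : (0:ℝ) < min 1 ε := lt_min one_pos hε
    exact lt_of_lt_of_le this (min_le_min (le_refl 1) hlb)
  · exact one_pos

lemma hgt_memUp_of_pos (hρ : IsCompatibleMetric ρ) {f : ↥(idempotents S)}
    (hf : 0 < hgt ρ e f) : e * ↑f = e := by
  by_cases hne : ((upcl e)ᶜ : Set ↥(idempotents S)).Nonempty
  · by_contra hc
    have hfK : f ∈ (upcl e)ᶜ := fun hmem => by
      have h0 : f ∈ {f : ↥(idempotents S) | e * ↑f = e} :=
        interior_subset (s := {f : ↥(idempotents S) | e * ↑f = e}) hmem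
      exact hc h0
    have h1 : sInf ((fun k => ρ f k) '' (upcl e)ᶜ) ≤ ρ f f :=
      csInf_le (hgt_img_bdd ρ e hρ f) ⟨f, hfK, rfl⟩
    rw [cm_self hρ] at h1
    rw [hgt, if_pos hne] at hf
    have := min_le_right (1:ℝ) (sInf ((fun k => ρ f k) '' (upcl e)ᶜ))
    linarith
  · rw [Set.not_nonempty_iff_eq_empty, ← Set.compl_univ, compl_inj_iff] at hne
    have h1 : f ∈ upcl e := hne ▸ Set.mem_univ f
    exact interior_subset (s := {f : ↥(idempotents S) | e * ↑f = e}) h1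

end Main

section Main2
open scoped NNReal Classical

variable {S : Type u} [Semigroup S] [TopologicalSpace S] [Inv S]
variable (h4 : ∀ x : S, x * x⁻¹ * x = x ∧ x⁻¹ * x * x⁻¹ = x⁻¹ ∧ x * x⁻¹ = x⁻¹ * x)
variable (h5 : ∀ x y : S, x * y * x = x → y * x * y = y → y = x⁻¹)
variable (ρ : ↥(idempotents S) → ↥(idempotents S) → ℝ)
variable (e : S)

include h4 h5 in
/-- `upcl e` is an upper set -/
lemma upcl_upclosed (hCM : ContinuousMul S) {a b : ↥(idempotents S)}
    (hab : (a : S) * (b : S) = (a : S)) (ha : a ∈ upcl e) : b ∈ upcl e := by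
  haveI := hCM
  have hφ : Continuous fun p : ↥(idempotents S) => (⟨(a : S) * (p : S),
      cs_idem_mul_idem h4 h5 a.2 p.2⟩ : ↥(idempotents S)) :=
    (continuous_const.mul continuous_subtype_val).subtype_mk _
  set φ : ↥(idempotents S) → ↥(idempotents S) := fun p => ⟨(a : S) * (p : S),
      cs_idem_mul_idem h4 h5 a.2 p.2⟩ with hφdef
  have hφb : φ b = a := Subtype.ext hab
  have hW : IsOpen (φ ⁻¹' (upcl e)) := (isOpen_interior).preimage hφ
  have hbW : b ∈ φ ⁻¹' (upcl e) := by
    simp only [Set.mem_preimage, hφb]; exact ha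
  have hWsub : φ ⁻¹' (upcl e) ⊆ {f : ↥(idempotents S) | e * ↑f = e} := by
    intro h hh
    have hE : e * ((a : S) * (h : S)) = e := by
      have := interior_subset (s := {f : ↥(idempotents S) | e * ↑f = e}) hh
      exact this
    have hhh : (h : S) * (h : S) = (h : S) := h.2
    show e * (h : S) = e
    calc e * (h : S) = (e * ((a:S) * (h:S))) * (h : S) := by rw [hE]
    _ = e * ((a:S) * ((h:S) * (h:S))) := by simp only [mul_assoc]
    _ = e * ((a:S) * (h:S)) := by rw [hhh]
    _ = e := hE
  exact interior_maximal hWsub hW hbW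

include h4 h5 in
lemma hgt_mul_le (hCM : ContinuousMul S) (hρ : IsCompatibleMetric ρ)
    (hρsub : ∀ (x y z : ↥(idempotents S))
      (hzx : (z : S) * (x : S) ∈ idempotents S) (hzy : (z : S) * (y : S) ∈ idempotents S),
      ρ ⟨(z : S) * (x : S), hzx⟩ ⟨(z : S) * (y : S), hzy⟩ ≤ ρ x y)
    (c f : ↥(idempotents S)) :
    hgt ρ e ⟨(c : S) * (f : S), cs_idem_mul_idem h4 h5 c.2 f.2⟩ ≤ hgt ρ e f := by
  set f' : ↥(idempotents S) := ⟨(c : S) * (f : S), cs_idem_mul_idem h4 h5 c.2 f.2⟩ with hf'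
  rw [hgt, hgt]
  split
  · next hne =>
    refine min_le_min (le_refl 1) ?_
    refine le_csInf (hne.image _) ?_
    rintro v ⟨k, hk, rfl⟩
    -- f' * k ∈ complement
    have hfk : (⟨(f' : S) * (k : S), cs_idem_mul_idem h4 h5 f'.2 k.2⟩ :
        ↥(idempotents S)) ∈ (upcl e)ᶜ := by
      intro hmem
      apply hk
      refine upcl_upclosed h4 h5 e hCM ?_ hmem
      show ((f' : S) * (k : S)) * (k : S) = (f' : S) * (k : S)
      rw [mul_assoc, k.2]
    have h1 : sInf ((fun k => ρ f' k) '' (upcl e)ᶜ) ≤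
        ρ f' ⟨(f' : S) * (k : S), cs_idem_mul_idem h4 h5 f'.2 k.2⟩ :=
      csInf_le (hgt_img_bdd ρ e hρ f') ⟨_, hfk, rfl⟩
    have h2 : ρ f' ⟨(f' : S) * (k : S), cs_idem_mul_idem h4 h5 f'.2 k.2⟩ ≤ ρ f k := by
      have heq : f' = ⟨(f' : S) * (f : S), cs_idem_mul_idem h4 h5 f'.2 f.2⟩ := by
        apply Subtype.ext
        show (f' : S) = (f' : S) * (f : S)
        show ((c:S) * (f:S)) = ((c:S) * (f:S)) * (f:S)
        rw [mul_assoc, f.2]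
      calc ρ f' ⟨(f' : S) * (k : S), _⟩
          = ρ ⟨(f' : S) * (f : S), cs_idem_mul_idem h4 h5 f'.2 f.2⟩
            ⟨(f' : S) * (k : S), cs_idem_mul_idem h4 h5 f'.2 k.2⟩ := by rw [← heq]
      _ ≤ ρ f k := hρsub f k f' _ _
    exact h1.trans h2
  · exact le_refl _

end Main2

section MainV
open scoped NNReal Classical
open Filter

variable {S : Type u} [Semigroup S] [TopologicalSpace S] [Inv S]
variable (h4 : ∀ x : S, x * x⁻¹ * x = x ∧ x⁻¹ * x * x⁻¹ = x⁻¹ ∧ x * x⁻¹ = x⁻¹ * x)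
variable (h5 : ∀ x y : S, x * y * x = x → y * x * y = y → y = x⁻¹)

include h4 h5 in
lemma exists_V (hCM : ContinuousMul S) (hInv : Continuous (fun x : S => x⁻¹))
    {e : S} (he : e * e = e)
    (hFC : FirstCountableTopology ↥(cliffordProj ⁻¹' {e} : Set S))
    (hBal : IsBalancedMaximalSubgroup S e) :
    ∃ V : ℕ → Set S,
      (∀ m, V m ⊆ cliffordProj ⁻¹' {e}) ∧
      (∀ m, V m ∈ nhdsWithin e (cliffordProj ⁻¹' {e})) ∧
      (∀ m, ∀ a ∈ V m, a⁻¹ ∈ V m) ∧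
      (∀ m, ∀ x, cliffordProj x = e → ∀ v ∈ V m, x * v * x⁻¹ ∈ V m) ∧
      (∀ m, ∀ a b c, a ∈ V (m+1) → b ∈ V (m+1) → c ∈ V (m+1) → a * b * c ∈ V m) ∧
      (∀ N ∈ nhdsWithin e (cliffordProj ⁻¹' {e}), ∃ m, V m ⊆ N) := by
  haveI := hCM
  haveI := hFC
  set H : Set S := cliffordProj ⁻¹' {e} with hH
  have heH : e ∈ H := by
    rw [hH]
    exact cs_idem_proj h4 h5 he
  -- H is closed under inverse and multiplication
  have hHinv : ∀ a, a ∈ H → a⁻¹ ∈ H := by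
    intro a ha
    rw [hH] at ha ⊢
    have ha' : a * a⁻¹ = e := ha
    show a⁻¹ * a⁻¹⁻¹ = e
    rw [cs_proj_inv h4 h5, ha']
  have hHmul : ∀ a b, a ∈ H → b ∈ H → a * b ∈ H := by
    intro a b ha hb
    rw [hH] at ha hb ⊢
    exact cs_mul_mem h4 h5 ha hb
  -- countable basis of 𝓝[H] e
  obtain ⟨b, hb⟩ := (nhds (⟨e, heH⟩ : ↥H)).exists_antitone_basis
  have hBB : (nhdsWithin e H).HasBasis (fun _ : ℕ => True) (fun m => (↑) '' b m) := by
    rw [← map_nhds_subtype_val (⟨e, heH⟩ : ↥H)]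
    exact hb.toHasBasis.map _
  set B : ℕ → Set S := fun m => (↑) '' b m with hBdef
  have hBmem : ∀ m, B m ∈ nhdsWithin e H := fun m => hBB.mem_of_mem trivial
  have hBbase : ∀ N ∈ nhdsWithin e H, ∃ m, B m ⊆ N := by
    intro N hN
    rcases hBB.mem_iff.1 hN with ⟨m, _, hm⟩
    exact ⟨m, hm⟩
  -- one-step: symmetric conjugation-invariant shrinking
  have hstep : ∀ M : Set S, M ∈ nhdsWithin e H →
      ∃ Vc : Set S, Vc ⊆ M ∧ Vc ⊆ H ∧ Vc ∈ nhdsWithin e H ∧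
        (∀ a ∈ Vc, a⁻¹ ∈ Vc) ∧
        (∀ x, cliffordProj x = e → ∀ v ∈ Vc, x * v * x⁻¹ ∈ Vc) := by
    intro M hM
    have hMH : M ∩ H ∈ nhdsWithin e H := Filter.inter_mem hM self_mem_nhdsWithin
    obtain ⟨V₀, hV₀sub, hV₀mem, hV₀conj⟩ := hBal (M ∩ H) Set.inter_subset_right hMH
    have hV₀H : V₀ ⊆ H := hV₀sub.trans Set.inter_subset_right
    obtain ⟨Q, hQo, heQ, hQsub⟩ := mem_nhdsWithin.1 hV₀mem
    have hconj0 : ∀ x, x ∈ H → ∀ v ∈ V₀, x * v * x⁻¹ ∈ V₀ := by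
      intro x hx v hv
      have := hV₀conj x hx
      rw [← this]
      exact Set.mem_image_of_mem _ hv
    refine ⟨V₀ ∩ {a | a⁻¹ ∈ V₀}, ?_, ?_, ?_, ?_, ?_⟩
    · exact (Set.inter_subset_left).trans (hV₀sub.trans Set.inter_subset_left)
    · exact (Set.inter_subset_left).trans hV₀H
    · refine Filter.inter_mem hV₀mem ?_
      refine mem_nhdsWithin.2 ⟨(fun x : S => x⁻¹) ⁻¹' Q, hQo.preimage hInv, ?_, ?_⟩
      · show e⁻¹ ∈ Q
        rw [cs_idem_inv h4 h5 he]; exact heQ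
      · rintro a ⟨haQ, haH⟩
        exact hQsub ⟨haQ, hHinv a haH⟩
    · rintro a ⟨ha1, ha2⟩
      refine ⟨ha2, ?_⟩
      show a⁻¹⁻¹ ∈ V₀
      rw [cs_inv_inv h4 h5]; exact ha1
    · rintro x hx v ⟨hv1, hv2⟩
      have hxH : x ∈ H := by rw [hH]; exact hx
      refine ⟨hconj0 x hxH v hv1, ?_⟩
      show (x * v * x⁻¹)⁻¹ ∈ V₀
      have hinv : (x * v * x⁻¹)⁻¹ = x * v⁻¹ * x⁻¹ := by
        rw [cs_mul_inv_rev h4 h5 (x * v) x⁻¹, cs_mul_inv_rev h4 h5 x v, cs_inv_inv h4 h5]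
        simp only [mul_assoc]
      rw [hinv]
      exact hconj0 x hxH v⁻¹ hv2
  -- product neighborhoods
  have hmul2 : ∀ R : Set S, IsOpen R → e ∈ R →
      ∃ P : Set S, IsOpen P ∧ e ∈ P ∧ ∀ a ∈ P, ∀ b ∈ P, a * b ∈ R := by
    intro R hRo heR
    have hopen : IsOpen {p : S × S | p.1 * p.2 ∈ R} := hRo.preimage continuous_mul
    have hmem : ((e, e) : S × S) ∈ {p : S × S | p.1 * p.2 ∈ R} := by
      show e * e ∈ R; rw [he]; exact heR
    rcases isOpen_prod_iff.1 hopen e e hmem with ⟨u, v, hu, hv, heu, hev, huv⟩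
    exact ⟨u ∩ v, hu.inter hv, ⟨heu, hev⟩,
      fun a ha b hb => huv (Set.mk_mem_prod ha.1 hb.2)⟩
  have htriple : ∀ M : Set S, M ∈ nhdsWithin e H →
      ∃ N : Set S, N ∈ nhdsWithin e H ∧ N ⊆ H ∧
        ∀ a b c, a ∈ N → b ∈ N → c ∈ N → a * b * c ∈ M := by
    intro M hM
    obtain ⟨Q, hQo, heQ, hQsub⟩ := mem_nhdsWithin.1 hM
    obtain ⟨P₂, hP₂o, heP₂, hP₂⟩ := hmul2 Q hQo heQ
    obtain ⟨P', hP'o, heP', hP'⟩ := hmul2 P₂ hP₂o heP₂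
    refine ⟨H ∩ (P' ∩ P₂), mem_nhdsWithin.2 ⟨P' ∩ P₂, hP'o.inter hP₂o, ⟨heP', heP₂⟩,
      fun a ha => ⟨ha.2, ha.1⟩⟩, Set.inter_subset_left, ?_⟩
    rintro a b c ⟨haH, haP', haP₂⟩ ⟨hbH, hbP', hbP₂⟩ ⟨hcH, hcP', hcP₂⟩
    have h1 : a * b ∈ P₂ := hP' a haP' b hbP'
    have h2 : a * b * c ∈ Q := hP₂ _ h1 _ hcP₂
    exact hQsub ⟨h2, hHmul _ _ (hHmul _ _ haH hbH) hcH⟩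
  -- the recursion
  set Pr : Set S → Prop := fun W => W ⊆ H ∧ W ∈ nhdsWithin e H ∧
    (∀ a ∈ W, a⁻¹ ∈ W) ∧ (∀ x, cliffordProj x = e → ∀ v ∈ W, x * v * x⁻¹ ∈ W) with hPr
  have hstep2 : ∀ (m : ℕ) (t : {W : Set S // Pr W}),
      ∃ t' : {W : Set S // Pr W}, t'.1 ⊆ B (m+1) ∧
        (∀ a b c, a ∈ t'.1 → b ∈ t'.1 → c ∈ t'.1 → a * b * c ∈ t.1) := by
    rintro m ⟨W, hW⟩
    obtain ⟨N, hNmem, hNH, hNcube⟩ := htriple W hW.2.1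
    obtain ⟨Vc, hVcsub, hVcH, hVcmem, hVcsym, hVcconj⟩ :=
      hstep (N ∩ B (m+1)) (Filter.inter_mem hNmem (hBmem (m+1)))
    refine ⟨⟨Vc, hVcH, hVcmem, hVcsym, hVcconj⟩, ?_, ?_⟩
    · exact hVcsub.trans Set.inter_subset_right
    · intro a b c ha hb hc
      exact hNcube a b c (hVcsub ha).1 (hVcsub hb).1 (hVcsub hc).1
  choose fstep hf1 hf2 using hstep2
  obtain ⟨V₀', hV₀'sub, hV₀'H, hV₀'mem, hV₀'sym, hV₀'conj⟩ := hstep (B 0) (hBmem 0)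
  set t₀ : {W : Set S // Pr W} := ⟨V₀', hV₀'H, hV₀'mem, hV₀'sym, hV₀'conj⟩ with ht₀
  set Vseq : ℕ → {W : Set S // Pr W} := fun m => Nat.rec t₀ fstep m with hVseq
  have hVsucc : ∀ m, Vseq (m+1) = fstep m (Vseq m) := fun m => rfl
  have hVB : ∀ m, (Vseq m).1 ⊆ B m := by
    intro m
    cases m with
    | zero => exact hV₀'sub
    | succ m' => rw [hVsucc m']; exact hf1 m' (Vseq m')
  refine ⟨fun m => (Vseq m).1, fun m => (Vseq m).2.1, fun m => (Vseq m).2.2.1,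
    fun m => (Vseq m).2.2.2.1, ?_, ?_, ?_⟩
  · intro m x hx v hv
    exact (Vseq m).2.2.2.2 x hx v hv
  · intro m a b c ha hb hc
    have := hf2 m (Vseq m) a b c
    rw [← hVsucc m] at this
    exact this ha hb hc
  · intro N hN
    rcases hBbase N hN with ⟨m, hm⟩
    exact ⟨m, (hVB m).trans hm⟩

end MainV

section MainU
open scoped NNReal Classical
open Filter

variable {S : Type u} [Semigroup S] [TopologicalSpace S] [Inv S]
variable (h4 : ∀ x : S, x * x⁻¹ * x = x ∧ x⁻¹ * x * x⁻¹ = x⁻¹ ∧ x * x⁻¹ = x⁻¹ * x)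
variable (h5 : ∀ x y : S, x * y * x = x → y * x * y = y → y = x⁻¹)
variable (ρ : ↥(idempotents S) → ↥(idempotents S) → ℝ)
variable (e : S) (he : e * e = e)

/-- entourage associated to `e`, a neighborhood `Vm` of `e` in `H_e`, and scale `m`. -/
def UeSet (Vm : Set S) (m : ℕ) : Set (S × S) :=
  {p | ρ (piE h4 h5 p.1) (piE h4 h5 p.2) < (4:ℝ)⁻¹ ^ m ∧
    ((4:ℝ)⁻¹ ^ m < min (hgt ρ e (piE h4 h5 p.1)) (hgt ρ e (piE h4 h5 p.2)) →
      (e * p.1) * (e * p.2)⁻¹ ∈ Vm)}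

include h4 h5

lemma lem_guard_up (hρ : IsCompatibleMetric ρ) {x : S}
    (h : 0 < hgt ρ e (piE h4 h5 x)) : e * (x * x⁻¹) = e :=
  hgt_memUp_of_pos ρ e hρ h

include he in
lemma lem_eH {x : S} (h : e * (x * x⁻¹) = e) : (e * x) * (e * x)⁻¹ = e := by
  rw [cs_proj_mul h4 h5, cs_idem_proj h4 h5 he, h]

include he in
lemma lem_split (z x : S) : e * (z * x) = (e * z) * (e * x) := by
  have hc : z * e = e * z := cs_idem_central h4 h5 he z
  calc e * (z * x) = (e * e) * (z * x) := by rw [he]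
  _ = e * ((e * z) * x) := by simp only [mul_assoc]
  _ = e * ((z * e) * x) := by rw [hc]
  _ = (e * z) * (e * x) := by simp only [mul_assoc]

lemma lem_guard_down {z x : S} (h : e * ((z * x) * (z * x)⁻¹) = e) :
    e * (z * z⁻¹) = e ∧ e * (x * x⁻¹) = e := by
  rw [cs_proj_mul h4 h5] at h
  set p := z * z⁻¹ with hp
  set q := x * x⁻¹ with hq
  have hpp : p * p = p := cs_proj_idem h4 h5 z
  have hqq : q * q = q := cs_proj_idem h4 h5 x
  have hcomm : q * p = p * q := cs_idem_comm h4 h5 hqq hpp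
  constructor
  · calc e * p = (e * (p * q)) * p := by rw [h]
    _ = e * (p * (q * p)) := by simp only [mul_assoc]
    _ = e * (p * (p * q)) := by rw [hcomm]
    _ = e * ((p * p) * q) := by simp only [mul_assoc]
    _ = e * (p * q) := by rw [hpp]
    _ = e := h
  · calc e * q = (e * (p * q)) * q := by rw [h]
    _ = e * (p * (q * q)) := by simp only [mul_assoc]
    _ = e * (p * q) := by rw [hqq]
    _ = e := h

include he in
lemma Ue_refl (hρ : IsCompatibleMetric ρ) (Vm : Set S) (hVe : e ∈ Vm) (m : ℕ) (x : S) :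
    (x, x) ∈ UeSet h4 h5 ρ e Vm m := by
  constructor
  · show ρ (piE h4 h5 x) (piE h4 h5 x) < _
    rw [cm_self hρ]
    positivity
  · intro hg
    have h0 : (0:ℝ) < hgt ρ e (piE h4 h5 x) := by
      have := lt_min_iff.1 hg
      have hp : (0:ℝ) < (4:ℝ)⁻¹ ^ m := by positivity
      linarith [this.1]
    have h1 := lem_guard_up h4 h5 ρ e hρ h0
    show (e * x) * (e * x)⁻¹ ∈ Vm
    rw [lem_eH h4 h5 e he h1]
    exact hVe

lemma Ue_symm (hρ : IsCompatibleMetric ρ) (Vm : Set S) (hVsym : ∀ a ∈ Vm, a⁻¹ ∈ Vm)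
    (m : ℕ) {x y : S} (h : (x, y) ∈ UeSet h4 h5 ρ e Vm m) :
    (y, x) ∈ UeSet h4 h5 ρ e Vm m := by
  obtain ⟨h1, h2⟩ := h
  constructor
  · show ρ _ _ < _
    rw [hρ.2.1]
    exact h1
  · intro hg
    rw [min_comm] at hg
    have h3 := h2 hg
    have h4' := hVsym _ h3
    have heq : ((e * x) * (e * y)⁻¹)⁻¹ = (e * y) * (e * x)⁻¹ := by
      rw [cs_mul_inv_rev h4 h5, cs_inv_inv h4 h5]
    rw [heq] at h4'
    exact h4'

lemma Ue_anti (Vm Vm1 : Set S) (hVn : Vm1 ⊆ Vm) (m : ℕ) :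
    UeSet h4 h5 ρ e Vm1 (m+1) ⊆ UeSet h4 h5 ρ e Vm m := by
  rintro ⟨x, y⟩ ⟨h1, h2⟩
  have hpow : ((4:ℝ)⁻¹) ^ (m+1) < (4:ℝ)⁻¹ ^ m := by
    apply pow_lt_pow_right_of_lt_one₀ (by norm_num) (by norm_num)
    omega
  constructor
  · exact h1.trans hpow
  · intro hg
    exact hVn (h2 (hpow.trans hg))

end MainU

section MainU2
open scoped NNReal Classical
open Filter

variable {S : Type u} [Semigroup S] [TopologicalSpace S] [Inv S]
variable (h4 : ∀ x : S, x * x⁻¹ * x = x ∧ x⁻¹ * x * x⁻¹ = x⁻¹ ∧ x * x⁻¹ = x⁻¹ * x)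
variable (h5 : ∀ x y : S, x * y * x = x → y * x * y = y → y = x⁻¹)
variable (ρ : ↥(idempotents S) → ↥(idempotents S) → ℝ)
variable (e : S) (he : e * e = e)

include h4 h5

lemma pow4_succ (m : ℕ) : ((4:ℝ)⁻¹) ^ m = 4 * ((4:ℝ)⁻¹) ^ (m+1) := by
  rw [pow_succ]
  ring

include he in
lemma Ue_cube (hρ : IsCompatibleMetric ρ) (Vm Vm1 : Set S)
    (hVH : Vm1 ⊆ cliffordProj ⁻¹' {e})
    (hVcube : ∀ a b c, a ∈ Vm1 → b ∈ Vm1 → c ∈ Vm1 → a * b * c ∈ Vm)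
    (m : ℕ) {x y z w : S}
    (p1 : (x, y) ∈ UeSet h4 h5 ρ e Vm1 (m+1)) (p2 : (y, z) ∈ UeSet h4 h5 ρ e Vm1 (m+1))
    (p3 : (z, w) ∈ UeSet h4 h5 ρ e Vm1 (m+1)) :
    (x, w) ∈ UeSet h4 h5 ρ e Vm m := by
  obtain ⟨r1, g1⟩ := p1
  obtain ⟨r2, g2⟩ := p2
  obtain ⟨r3, g3⟩ := p3
  simp only [UeSet, Set.mem_setOf_eq] at r1 r2 r3 g1 g2 g3 ⊢
  have hpos : (0:ℝ) < ((4:ℝ)⁻¹) ^ (m+1) := by positivity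
  have hstep := pow4_succ h4 h5 m
  constructor
  · -- triangle
    have t1 := hρ.2.2.1 (piE h4 h5 x) (piE h4 h5 y) (piE h4 h5 w)
    have t2 := hρ.2.2.1 (piE h4 h5 y) (piE h4 h5 z) (piE h4 h5 w)
    linarith
  · intro hg
    rw [lt_min_iff] at hg
    obtain ⟨hgx, hgw⟩ := hg
    -- heights of the middle points
    have hy : ((4:ℝ)⁻¹) ^ (m+1) < hgt ρ e (piE h4 h5 y) := by
      have hlip := hgt_lip ρ e hρ (piE h4 h5 x) (piE h4 h5 y)
      linarith
    have hz : ((4:ℝ)⁻¹) ^ (m+1) < hgt ρ e (piE h4 h5 z) := by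
      have hlip := hgt_lip ρ e hρ (piE h4 h5 w) (piE h4 h5 z)
      have hsymm : ρ (piE h4 h5 w) (piE h4 h5 z) = ρ (piE h4 h5 z) (piE h4 h5 w) := hρ.2.1 _ _
      linarith
    have hgx' : ((4:ℝ)⁻¹) ^ (m+1) < hgt ρ e (piE h4 h5 x) := by linarith
    have hgw' : ((4:ℝ)⁻¹) ^ (m+1) < hgt ρ e (piE h4 h5 w) := by linarith
    have q1 := g1 (lt_min_iff.2 ⟨hgx', hy⟩)
    have q2 := g2 (lt_min_iff.2 ⟨hy, hz⟩)
    have q3 := g3 (lt_min_iff.2 ⟨hz, hgw'⟩)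
    -- memberships in H_e
    have hyH : (e * y) * (e * y)⁻¹ = e :=
      lem_eH h4 h5 e he (lem_guard_up h4 h5 ρ e hρ (lt_trans hpos hy))
    have hzH : (e * z) * (e * z)⁻¹ = e :=
      lem_eH h4 h5 e he (lem_guard_up h4 h5 ρ e hρ (lt_trans hpos hz))
    have hxH : (e * x) * (e * x)⁻¹ = e :=
      lem_eH h4 h5 e he (lem_guard_up h4 h5 ρ e hρ (lt_trans hpos hgx'))
    -- chain equality
    have key : (e * x) * (e * w)⁻¹ =
        ((e * x) * (e * y)⁻¹) * ((e * y) * (e * z)⁻¹) * ((e * z) * (e * w)⁻¹) := by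
      have i1 : (e * y)⁻¹ * (e * y) = e := cs_inv_mul h4 h5 hyH
      have i2 : (e * z)⁻¹ * (e * z) = e := cs_inv_mul h4 h5 hzH
      have j1 : ((e * x) * (e * y)⁻¹) * ((e * y) * (e * z)⁻¹) = (e * x) * (e * z)⁻¹ := by
        calc ((e * x) * (e * y)⁻¹) * ((e * y) * (e * z)⁻¹)
            = (e * x) * (((e * y)⁻¹ * (e * y)) * (e * z)⁻¹) := by simp only [mul_assoc]
        _ = (e * x) * (e * (e * z)⁻¹) := by rw [i1]
        _ = ((e * x) * e) * (e * z)⁻¹ := by simp only [mul_assoc]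
        _ = (e * x) * (e * z)⁻¹ := by rw [cs_right_id h4 h5 hxH]
      have j2 : ((e * x) * (e * z)⁻¹) * ((e * z) * (e * w)⁻¹) = (e * x) * (e * w)⁻¹ := by
        calc ((e * x) * (e * z)⁻¹) * ((e * z) * (e * w)⁻¹)
            = (e * x) * (((e * z)⁻¹ * (e * z)) * (e * w)⁻¹) := by simp only [mul_assoc]
        _ = (e * x) * (e * (e * w)⁻¹) := by rw [i2]
        _ = ((e * x) * e) * (e * w)⁻¹ := by simp only [mul_assoc]
        _ = (e * x) * (e * w)⁻¹ := by rw [cs_right_id h4 h5 hxH]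
      rw [j1, j2]
    rw [key]
    exact hVcube _ _ _ q1 q2 q3

end MainU2

section MainU3
open scoped NNReal Classical
open Filter

variable {S : Type u} [Semigroup S] [TopologicalSpace S] [Inv S]
variable (h4 : ∀ x : S, x * x⁻¹ * x = x ∧ x⁻¹ * x * x⁻¹ = x⁻¹ ∧ x * x⁻¹ = x⁻¹ * x)
variable (h5 : ∀ x y : S, x * y * x = x → y * x * y = y → y = x⁻¹)
variable (ρ : ↥(idempotents S) → ↥(idempotents S) → ℝ)
variable (e : S) (he : e * e = e)

include h4 h5

lemma piE_mul (z x : S) : piE h4 h5 (z * x) =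
    ⟨(piE h4 h5 z : S) * (piE h4 h5 x : S),
      cs_idem_mul_idem h4 h5 (piE h4 h5 z).2 (piE h4 h5 x).2⟩ := by
  apply Subtype.ext
  exact cs_proj_mul h4 h5 z x

lemma piE_mul' (z x : S) : piE h4 h5 (x * z) =
    ⟨(piE h4 h5 z : S) * (piE h4 h5 x : S),
      cs_idem_mul_idem h4 h5 (piE h4 h5 z).2 (piE h4 h5 x).2⟩ := by
  apply Subtype.ext
  show (x * z) * (x * z)⁻¹ = (z * z⁻¹) * (x * x⁻¹)
  rw [cs_proj_mul h4 h5 x z]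
  exact cs_idem_comm h4 h5 (cs_proj_idem h4 h5 x) (cs_proj_idem h4 h5 z)

lemma piE_inv (x : S) : piE h4 h5 x⁻¹ = piE h4 h5 x := by
  apply Subtype.ext
  exact cs_proj_inv h4 h5 x

lemma hgt_piE_mul_le (hCM : ContinuousMul S) (hρ : IsCompatibleMetric ρ)
    (hρsub : ∀ (x y z : ↥(idempotents S))
      (hzx : (z : S) * (x : S) ∈ idempotents S) (hzy : (z : S) * (y : S) ∈ idempotents S),
      ρ ⟨(z : S) * (x : S), hzx⟩ ⟨(z : S) * (y : S), hzy⟩ ≤ ρ x y)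
    (z x : S) : hgt ρ e (piE h4 h5 (z * x)) ≤ hgt ρ e (piE h4 h5 x) := by
  rw [piE_mul h4 h5]
  exact hgt_mul_le h4 h5 ρ e hCM hρ hρsub (piE h4 h5 z) (piE h4 h5 x)

lemma hgt_piE_mul_le' (hCM : ContinuousMul S) (hρ : IsCompatibleMetric ρ)
    (hρsub : ∀ (x y z : ↥(idempotents S))
      (hzx : (z : S) * (x : S) ∈ idempotents S) (hzy : (z : S) * (y : S) ∈ idempotents S),
      ρ ⟨(z : S) * (x : S), hzx⟩ ⟨(z : S) * (y : S), hzy⟩ ≤ ρ x y)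
    (z x : S) : hgt ρ e (piE h4 h5 (x * z)) ≤ hgt ρ e (piE h4 h5 x) := by
  rw [piE_mul' h4 h5]
  exact hgt_mul_le h4 h5 ρ e hCM hρ hρsub (piE h4 h5 z) (piE h4 h5 x)

lemma rho_piE_mul_le (hρsub : ∀ (x y z : ↥(idempotents S))
      (hzx : (z : S) * (x : S) ∈ idempotents S) (hzy : (z : S) * (y : S) ∈ idempotents S),
      ρ ⟨(z : S) * (x : S), hzx⟩ ⟨(z : S) * (y : S), hzy⟩ ≤ ρ x y)
    (z x y : S) :
    ρ (piE h4 h5 (z * x)) (piE h4 h5 (z * y)) ≤ ρ (piE h4 h5 x) (piE h4 h5 y) := by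
  rw [piE_mul h4 h5 z x, piE_mul h4 h5 z y]
  exact hρsub _ _ _ _ _

lemma rho_piE_mul_le' (hρsub : ∀ (x y z : ↥(idempotents S))
      (hzx : (z : S) * (x : S) ∈ idempotents S) (hzy : (z : S) * (y : S) ∈ idempotents S),
      ρ ⟨(z : S) * (x : S), hzx⟩ ⟨(z : S) * (y : S), hzy⟩ ≤ ρ x y)
    (z x y : S) :
    ρ (piE h4 h5 (x * z)) (piE h4 h5 (y * z)) ≤ ρ (piE h4 h5 x) (piE h4 h5 y) := by
  rw [piE_mul' h4 h5 z x, piE_mul' h4 h5 z y]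
  exact hρsub _ _ _ _ _

include he in
lemma Ue_subinv_left (hCM : ContinuousMul S) (hρ : IsCompatibleMetric ρ)
    (hρsub : ∀ (x y z : ↥(idempotents S))
      (hzx : (z : S) * (x : S) ∈ idempotents S) (hzy : (z : S) * (y : S) ∈ idempotents S),
      ρ ⟨(z : S) * (x : S), hzx⟩ ⟨(z : S) * (y : S), hzy⟩ ≤ ρ x y)
    (Vm : Set S)
    (hVconj : ∀ x, cliffordProj x = e → ∀ v ∈ Vm, x * v * x⁻¹ ∈ Vm)
    (m : ℕ) {x y : S} (z : S) (h : (x, y) ∈ UeSet h4 h5 ρ e Vm m) :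
    (z * x, z * y) ∈ UeSet h4 h5 ρ e Vm m := by
  obtain ⟨r1, g1⟩ := h
  constructor
  · exact lt_of_le_of_lt (rho_piE_mul_le h4 h5 ρ hρsub z x y) r1
  · intro hg
    rw [lt_min_iff] at hg
    obtain ⟨hgx, hgy⟩ := hg
    have hpos : (0:ℝ) < ((4:ℝ)⁻¹) ^ m := by positivity
    -- guards upstairs
    have hx' : ((4:ℝ)⁻¹) ^ m < hgt ρ e (piE h4 h5 x) :=
      lt_of_lt_of_le hgx (hgt_piE_mul_le h4 h5 ρ e hCM hρ hρsub z x)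
    have hy' : ((4:ℝ)⁻¹) ^ m < hgt ρ e (piE h4 h5 y) :=
      lt_of_lt_of_le hgy (hgt_piE_mul_le h4 h5 ρ e hCM hρ hρsub z y)
    have hgmem := g1 (lt_min_iff.2 ⟨hx', hy'⟩)
    -- e ≤ π z
    have hzx_up : e * ((z * x) * (z * x)⁻¹) = e :=
      lem_guard_up h4 h5 ρ e hρ (lt_trans hpos hgx)
    obtain ⟨hez, hex⟩ := lem_guard_down h4 h5 e hzx_up
    have hzy_up : e * ((z * y) * (z * y)⁻¹) = e :=
      lem_guard_up h4 h5 ρ e hρ (lt_trans hpos hgy)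
    obtain ⟨_, hey⟩ := lem_guard_down h4 h5 e hzy_up
    -- memberships in H_e
    have hezH : (e * z) * (e * z)⁻¹ = e := lem_eH h4 h5 e he hez
    have hexH : (e * x) * (e * x)⁻¹ = e := lem_eH h4 h5 e he hex
    have heyH : (e * y) * (e * y)⁻¹ = e := lem_eH h4 h5 e he hey
    -- conjugation identity
    have key : (e * (z * x)) * (e * (z * y))⁻¹ =
        (e * z) * ((e * x) * (e * y)⁻¹) * (e * z)⁻¹ := by
      rw [lem_split h4 h5 e he z x, lem_split h4 h5 e he z y,
        cs_mul_inv_rev h4 h5 (e * z) (e * y)]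
      simp only [mul_assoc]
    show (e * (z * x)) * (e * (z * y))⁻¹ ∈ Vm
    rw [key]
    exact hVconj (e * z) hezH _ hgmem

include he in
lemma Ue_subinv_right (hCM : ContinuousMul S) (hρ : IsCompatibleMetric ρ)
    (hρsub : ∀ (x y z : ↥(idempotents S))
      (hzx : (z : S) * (x : S) ∈ idempotents S) (hzy : (z : S) * (y : S) ∈ idempotents S),
      ρ ⟨(z : S) * (x : S), hzx⟩ ⟨(z : S) * (y : S), hzy⟩ ≤ ρ x y)
    (Vm : Set S) (m : ℕ) {x y : S} (z : S) (h : (x, y) ∈ UeSet h4 h5 ρ e Vm m) :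
    (x * z, y * z) ∈ UeSet h4 h5 ρ e Vm m := by
  obtain ⟨r1, g1⟩ := h
  constructor
  · exact lt_of_le_of_lt (rho_piE_mul_le' h4 h5 ρ hρsub z x y) r1
  · intro hg
    rw [lt_min_iff] at hg
    obtain ⟨hgx, hgy⟩ := hg
    have hpos : (0:ℝ) < ((4:ℝ)⁻¹) ^ m := by positivity
    have hx' : ((4:ℝ)⁻¹) ^ m < hgt ρ e (piE h4 h5 x) :=
      lt_of_lt_of_le hgx (hgt_piE_mul_le' h4 h5 ρ e hCM hρ hρsub z x)
    have hy' : ((4:ℝ)⁻¹) ^ m < hgt ρ e (piE h4 h5 y) :=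
      lt_of_lt_of_le hgy (hgt_piE_mul_le' h4 h5 ρ e hCM hρ hρsub z y)
    have hgmem := g1 (lt_min_iff.2 ⟨hx', hy'⟩)
    have hxz_up : e * ((x * z) * (x * z)⁻¹) = e :=
      lem_guard_up h4 h5 ρ e hρ (lt_trans hpos hgx)
    obtain ⟨hex, hez⟩ := lem_guard_down h4 h5 e hxz_up
    have hyz_up : e * ((y * z) * (y * z)⁻¹) = e :=
      lem_guard_up h4 h5 ρ e hρ (lt_trans hpos hgy)
    obtain ⟨hey, _⟩ := lem_guard_down h4 h5 e hyz_up
    have hezH : (e * z) * (e * z)⁻¹ = e := lem_eH h4 h5 e he hez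
    have hexH : (e * x) * (e * x)⁻¹ = e := lem_eH h4 h5 e he hex
    have heyH : (e * y) * (e * y)⁻¹ = e := lem_eH h4 h5 e he hey
    have key : (e * (x * z)) * (e * (y * z))⁻¹ = (e * x) * (e * y)⁻¹ := by
      rw [lem_split h4 h5 e he x z, lem_split h4 h5 e he y z,
        cs_mul_inv_rev h4 h5 (e * y) (e * z)]
      have i1 : (e * z) * ((e * z)⁻¹ * (e * y)⁻¹) = e * (e * y)⁻¹ := by
        rw [← mul_assoc, hezH]
      calc (e * x) * (e * z) * ((e * z)⁻¹ * (e * y)⁻¹)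
          = (e * x) * ((e * z) * ((e * z)⁻¹ * (e * y)⁻¹)) := by simp only [mul_assoc]
      _ = (e * x) * (e * (e * y)⁻¹) := by rw [i1]
      _ = ((e * x) * e) * (e * y)⁻¹ := by simp only [mul_assoc]
      _ = (e * x) * (e * y)⁻¹ := by rw [cs_right_id h4 h5 hexH]
    show (e * (x * z)) * (e * (y * z))⁻¹ ∈ Vm
    rw [key]
    exact hgmem

include he in
lemma Ue_subinv_inv (hρ : IsCompatibleMetric ρ)
    (Vm : Set S) (hVsym : ∀ a ∈ Vm, a⁻¹ ∈ Vm)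
    (hVconj : ∀ x, cliffordProj x = e → ∀ v ∈ Vm, x * v * x⁻¹ ∈ Vm)
    (m : ℕ) {x y : S} (h : (x, y) ∈ UeSet h4 h5 ρ e Vm m) :
    (x⁻¹, y⁻¹) ∈ UeSet h4 h5 ρ e Vm m := by
  obtain ⟨r1, g1⟩ := h
  constructor
  · show ρ (piE h4 h5 x⁻¹) (piE h4 h5 y⁻¹) < _
    rw [piE_inv h4 h5, piE_inv h4 h5]
    exact r1
  · intro hg
    rw [piE_inv h4 h5, piE_inv h4 h5] at hg
    rw [lt_min_iff] at hg
    obtain ⟨hgx, hgy⟩ := hg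
    have hpos : (0:ℝ) < ((4:ℝ)⁻¹) ^ m := by positivity
    have hgmem := g1 (lt_min_iff.2 ⟨hgx, hgy⟩)
    have hex : e * (x * x⁻¹) = e := lem_guard_up h4 h5 ρ e hρ (lt_trans hpos hgx)
    have hey : e * (y * y⁻¹) = e := lem_guard_up h4 h5 ρ e hρ (lt_trans hpos hgy)
    have hexH : (e * x) * (e * x)⁻¹ = e := lem_eH h4 h5 e he hex
    have heyH : (e * y) * (e * y)⁻¹ = e := lem_eH h4 h5 e he hey
    set a := e * x with ha
    set b := e * y with hb
    -- e * x⁻¹ = a⁻¹ , e * y⁻¹ = b⁻¹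
    have hax : e * x⁻¹ = a⁻¹ := by
      rw [ha, cs_mul_idem_inv h4 h5 he x, cs_idem_central h4 h5 he x]
    have hby : e * y⁻¹ = b⁻¹ := by
      rw [hb, cs_mul_idem_inv h4 h5 he y, cs_idem_central h4 h5 he y]
    show (e * x⁻¹) * (e * y⁻¹)⁻¹ ∈ Vm
    rw [hax, hby, cs_inv_inv h4 h5 b]
    -- a⁻¹ * b = a⁻¹ * (b * a⁻¹) * (a⁻¹)⁻¹
    have haiH : a⁻¹ * (a⁻¹)⁻¹ = e := cs_inv_mem h4 h5 hexH
    have hbmem : b * a⁻¹ ∈ Vm := by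
      have : b * a⁻¹ = (a * b⁻¹)⁻¹ := by
        rw [cs_mul_inv_rev h4 h5 a b⁻¹, cs_inv_inv h4 h5 b]
      rw [this]
      exact hVsym _ hgmem
    have key : a⁻¹ * b = a⁻¹ * (b * a⁻¹) * (a⁻¹)⁻¹ := by
      rw [cs_inv_inv h4 h5 a]
      have i1 : a⁻¹ * a = e := cs_inv_mul h4 h5 hexH
      have habH : a⁻¹ * b * (a⁻¹ * b)⁻¹ = e :=
        cs_mul_mem h4 h5 (cs_inv_mem h4 h5 hexH) heyH
      calc a⁻¹ * b = (a⁻¹ * b) * e := by rw [cs_right_id h4 h5 habH]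
      _ = a⁻¹ * b * (a⁻¹ * a) := by rw [i1]
      _ = a⁻¹ * (b * a⁻¹) * a := by simp only [mul_assoc]
    rw [key]
    exact hVconj a⁻¹ haiH _ hbmem

end MainU3

section MainU4
open scoped NNReal Classical
open Filter

variable {S : Type u} [Semigroup S] [TopologicalSpace S] [Inv S]
variable (h4 : ∀ x : S, x * x⁻¹ * x = x ∧ x⁻¹ * x * x⁻¹ = x⁻¹ ∧ x * x⁻¹ = x⁻¹ * x)
variable (h5 : ∀ x y : S, x * y * x = x → y * x * y = y → y = x⁻¹)
variable (ρ : ↥(idempotents S) → ↥(idempotents S) → ℝ)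
variable (e : S) (he : e * e = e)

include h4 h5

lemma piE_continuous (hCM : ContinuousMul S) (hInv : Continuous (fun x : S => x⁻¹)) :
    Continuous (piE h4 h5 (S := S)) := by
  haveI := hCM
  exact (continuous_id.mul hInv).subtype_mk _

include he in
lemma Ue_section_nhds (hCM : ContinuousMul S) (hInv : Continuous (fun x : S => x⁻¹))
    (hρ : IsCompatibleMetric ρ) (Vm : Set S)
    (hVmem : Vm ∈ nhdsWithin e (cliffordProj ⁻¹' {e}))
    (m : ℕ) (x : S) :
    {y | (x, y) ∈ UeSet h4 h5 ρ e Vm m} ∈ nhds x := by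
  haveI := hCM
  have hπ : Continuous (piE h4 h5 (S := S)) := piE_continuous h4 h5 hCM hInv
  have hpos : (0:ℝ) < ((4:ℝ)⁻¹) ^ m := by positivity
  -- the ρ-part
  have hball : {y : S | ρ (piE h4 h5 x) (piE h4 h5 y) < (4:ℝ)⁻¹ ^ m} ∈ nhds x := by
    have h1 : {f : ↥(idempotents S) | ρ (piE h4 h5 x) f < (4:ℝ)⁻¹ ^ m} ∈
        nhds (piE h4 h5 x) := cm_ball_mem_nhds hρ _ hpos
    exact hπ.continuousAt.preimage_mem_nhds h1
  -- the guard part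
  have hguard : {y : S | (4:ℝ)⁻¹ ^ m <
      min (hgt ρ e (piE h4 h5 x)) (hgt ρ e (piE h4 h5 y)) →
      (e * x) * (e * y)⁻¹ ∈ Vm} ∈ nhds x := by
    by_cases hx : (4:ℝ)⁻¹ ^ m < hgt ρ e (piE h4 h5 x)
    · obtain ⟨Q, hQo, heQ, hQsub⟩ := mem_nhdsWithin.1 hVmem
      have hex : e * (x * x⁻¹) = e := lem_guard_up h4 h5 ρ e hρ (lt_trans hpos hx)
      have hexH : (e * x) * (e * x)⁻¹ = e := lem_eH h4 h5 e he hex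
      have hmap' : Continuous fun y : S => (e * x) * (e * y)⁻¹ := by
        have : Continuous fun y : S => (e * y)⁻¹ := by
          have h1 : Continuous fun y : S => e * y := continuous_const.mul continuous_id
          exact hInv.comp h1
        exact continuous_const.mul this
      have hopen : IsOpen {y : S | (e * x) * (e * y)⁻¹ ∈ Q} := hQo.preimage hmap'
      have hxmem : x ∈ {y : S | (e * x) * (e * y)⁻¹ ∈ Q} := by
        show (e * x) * (e * x)⁻¹ ∈ Q
        rw [hexH]
        exact heQ
      refine Filter.mem_of_superset (hopen.mem_nhds hxmem) ?_
      intro y hy hg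
      rw [lt_min_iff] at hg
      have hey : e * (y * y⁻¹) = e := lem_guard_up h4 h5 ρ e hρ (lt_trans hpos hg.2)
      have heyH : (e * y) * (e * y)⁻¹ = e := lem_eH h4 h5 e he hey
      have hH : (e * x) * (e * y)⁻¹ ∈ cliffordProj ⁻¹' {e} :=
        cs_mul_mem h4 h5 hexH (cs_inv_mem h4 h5 heyH)
      exact hQsub ⟨hy, hH⟩
    · refine Filter.mem_of_superset Filter.univ_mem ?_
      intro y _ hg
      rw [lt_min_iff] at hg
      exact absurd hg.1 hx
  exact Filter.inter_mem hball hguard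

end MainU4

section Backward
open scoped NNReal Classical
open Filter

theorem backward_dir (S : Type u) [Semigroup S] [TopologicalSpace S] [Inv S]
    (hS : IsTopologicalCliffordSemigroup S) (hdi : Ditopological S)
    (A : Set S) (hAE : A ⊆ idempotents S) (hAc : A.Countable)
    (hAdense : IsUDenseInIdempotents S A)
    (ρ : ↥(idempotents S) → ↥(idempotents S) → ℝ)
    (hρ : IsCompatibleMetric ρ)
    (hρsub : ∀ (x y z : ↥(idempotents S))
      (hzx : (z : S) * (x : S) ∈ idempotents S) (hzy : (z : S) * (y : S) ∈ idempotents S),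
      ρ ⟨(z : S) * (x : S), hzx⟩ ⟨(z : S) * (y : S), hzy⟩ ≤ ρ x y)
    (hgrp : ∀ e ∈ A, FirstCountableTopology ↥(cliffordProj ⁻¹' {e} : Set S) ∧
      IsBalancedMaximalSubgroup S e) :
    ∃ d : S → S → ℝ, IsCompatibleMetric d ∧
      (∀ x y z : S, max (d (z * x) (z * y)) (d (x * z) (y * z)) ≤ d x y) ∧
      (∀ x y : S, d x y = d x⁻¹ y⁻¹) := by
  obtain ⟨hT2, hCM, hInv, h4, h5⟩ := hS
  haveI := hT2
  haveI := hCM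
  by_cases hemp : IsEmpty S
  · refine ⟨fun _ _ => 0, ⟨fun x => isEmptyElim x, fun x => isEmptyElim x,
      fun x => isEmptyElim x, fun s => ⟨fun _ x => isEmptyElim x, fun _ => ?_⟩⟩,
      fun x => isEmptyElim x, fun x => isEmptyElim x⟩
    rw [Set.eq_empty_of_isEmpty s]
    exact isOpen_empty
  rw [not_isEmpty_iff] at hemp
  obtain ⟨x₀⟩ := hemp
  -- A is nonempty
  have hAne : A.Nonempty := by
    obtain ⟨et, heA, _, _⟩ := hAdense (piE h4 h5 x₀) Set.univ Filter.univ_mem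
    exact ⟨et, heA⟩
  obtain ⟨g, hgA⟩ := Set.Countable.exists_eq_range hAc hAne
  have hgmem : ∀ n, g n ∈ A := fun n => hgA ▸ Set.mem_range_self n
  have hgid : ∀ n, g n * g n = g n := fun n => hAE (hgmem n)
  -- choose the balanced neighborhood sequences
  have hVex : ∀ n : ℕ, ∃ V : ℕ → Set S,
      (∀ m, V m ⊆ cliffordProj ⁻¹' {g n}) ∧
      (∀ m, V m ∈ nhdsWithin (g n) (cliffordProj ⁻¹' {g n})) ∧
      (∀ m, ∀ a ∈ V m, a⁻¹ ∈ V m) ∧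
      (∀ m, ∀ x, cliffordProj x = g n → ∀ v ∈ V m, x * v * x⁻¹ ∈ V m) ∧
      (∀ m, ∀ a b c, a ∈ V (m+1) → b ∈ V (m+1) → c ∈ V (m+1) → a * b * c ∈ V m) ∧
      (∀ N ∈ nhdsWithin (g n) (cliffordProj ⁻¹' {g n}), ∃ m, V m ⊆ N) := by
    intro n
    obtain ⟨hFC, hBal⟩ := hgrp (g n) (hgmem n)
    exact exists_V h4 h5 hCM hInv (hgid n) hFC hBal
  choose VV hV1 hV2 hV3 hV4 hV5 hV6 using hVex
  have hVe : ∀ n m, g n ∈ VV n m := by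
    intro n m
    refine mem_of_mem_nhdsWithin ?_ (hV2 n m)
    exact cs_idem_proj h4 h5 (hgid n)
  have hVnested : ∀ n m, VV n (m+1) ⊆ VV n m := by
    intro n m v hv
    have hvH : v * v⁻¹ = g n := hV1 n (m+1) hv
    have h1 : v * g n * g n ∈ VV n m := hV5 n m v (g n) (g n) hv (hVe n (m+1)) (hVe n (m+1))
    have h2 : v * g n = v := cs_right_id h4 h5 hvH
    rwa [h2, h2] at h1
  have hVmono : ∀ n {a b : ℕ}, a ≤ b → VV n b ⊆ VV n a := by
    intro n a b hab
    induction b with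
    | zero => rw [Nat.le_zero.1 hab]
    | succ b' ih =>
      rcases Nat.lt_or_ge a (b'+1) with hlt | hge
      · exact (hVnested n b').trans (ih (Nat.lt_succ_iff.1 hlt))
      · have : a = b' + 1 := le_antisymm hab hge
        rw [this]
  -- the entourages
  set UU : ℕ → ℕ → Set (S × S) := fun n m => UeSet h4 h5 ρ (g n) (VV n m) m with hUU
  set T : ℕ → Set (S × S) := fun k => ⋂ n ∈ Finset.range k, UU n k with hT
  have hTmem : ∀ k (p : S × S), p ∈ T k ↔ ∀ n < k, p ∈ UU n k := by
    intro k p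
    simp [hT, Set.mem_iInter, Finset.mem_range]
  have Trefl : ∀ k (x : S), (x, x) ∈ T k := by
    intro k x
    rw [hTmem]
    intro n _
    exact Ue_refl h4 h5 ρ (g n) (hgid n) hρ _ (hVe n k) k x
  have Tsymm : ∀ k (x y : S), (x, y) ∈ T k → (y, x) ∈ T k := by
    intro k x y hxy
    rw [hTmem] at hxy ⊢
    intro n hn
    exact Ue_symm h4 h5 ρ (g n) hρ _ (hV3 n k) k (hxy n hn)
  have T0 : ∀ p : S × S, p ∈ T 0 := by
    intro p
    rw [hTmem]
    intro n hn
    omega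
  have Tanti : ∀ k, T (k+1) ⊆ T k := by
    intro k p hp
    rw [hTmem] at hp ⊢
    intro n hn
    exact Ue_anti h4 h5 ρ (g n) _ _ (hVnested n k) k (hp n (by omega))
  have Tcube : ∀ k (x y z w : S), (x,y) ∈ T (k+1) → (y,z) ∈ T (k+1) → (z,w) ∈ T (k+1) →
      (x,w) ∈ T k := by
    intro k x y z w p1 p2 p3
    rw [hTmem] at p1 p2 p3 ⊢
    intro n hn
    exact Ue_cube h4 h5 ρ (g n) (hgid n) hρ _ _ (hV1 n (k+1)) (hV5 n k) k
      (p1 n (by omega)) (p2 n (by omega)) (p3 n (by omega))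
  have Tnbhd : ∀ k (x : S), {y | (x, y) ∈ T k} ∈ nhds x := by
    intro k x
    have heq : {y | (x, y) ∈ T k} = ⋂ n ∈ Finset.range k, {y | (x, y) ∈ UU n k} := by
      ext y
      simp [hT, Set.mem_iInter]
    rw [heq]
    refine (Filter.biInter_finset_mem _).2 ?_
    intro n _
    exact Ue_section_nhds h4 h5 ρ (g n) (hgid n) hCM hInv hρ _ (hV2 n k) k x
  have Tleft : ∀ (z : S) k (p : S × S), p ∈ T k → (z * p.1, z * p.2) ∈ T k := by
    intro z k p hp
    rw [hTmem] at hp ⊢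
    intro n hn
    exact Ue_subinv_left h4 h5 ρ (g n) (hgid n) hCM hρ hρsub _ (hV4 n k) k z (hp n hn)
  have Tright : ∀ (z : S) k (p : S × S), p ∈ T k → (p.1 * z, p.2 * z) ∈ T k := by
    intro z k p hp
    rw [hTmem] at hp ⊢
    intro n hn
    exact Ue_subinv_right h4 h5 ρ (g n) (hgid n) hCM hρ hρsub _ k z (hp n hn)
  have Tinv : ∀ k (p : S × S), p ∈ T k → (p.1⁻¹, p.2⁻¹) ∈ T k := by
    intro k p hp
    rw [hTmem] at hp ⊢
    intro n hn
    exact Ue_subinv_inv h4 h5 ρ (g n) (hgid n) hρ _ (hV3 n k) (hV4 n k) k (hp n hn)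
  -- base property via ditopologicality and U-density
  have hbase : ∀ (x : S), ∀ O ∈ nhds x, ∃ k, {y | (x, y) ∈ T k} ⊆ O := by
    intro x O hO
    obtain ⟨U, hU, W, hWE, hWmem, hdiv⟩ := hdi x O hO
    have hxU₀ : x ∈ interior U := mem_interior_iff_mem_nhds.2 hU
    -- translate W to a neighborhood in the subtype
    have hW1 : {f : ↥(idempotents S) | (f : S) ∈ W} ∈ nhds (piE h4 h5 x) := by
      have h1 := map_nhds_subtype_val (piE h4 h5 x)
      have h2 : W ∈ Filter.map ((↑) : ↥(idempotents S) → S) (nhds (piE h4 h5 x)) := by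
        rw [h1]; exact hWmem
      exact h2
    have hxself : x * (x * x⁻¹) = x := by
      rw [(h4 x).2.2, ← mul_assoc, (h4 x).1]
    have hW2 : {f : ↥(idempotents S) | x * (f : S) ∈ interior U} ∈ nhds (piE h4 h5 x) := by
      have hc : Continuous fun f : ↥(idempotents S) => x * (f : S) :=
        continuous_const.mul continuous_subtype_val
      refine (hc.continuousAt).preimage_mem_nhds ?_
      refine isOpen_interior.mem_nhds ?_
      show x * (x * x⁻¹) ∈ interior U
      rw [hxself]
      exact hxU₀
    obtain ⟨et, hetA, hetO, hint⟩ := hAdense (piE h4 h5 x) _ (Filter.inter_mem hW1 hW2)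
    obtain ⟨hetW, hetU⟩ := hetO
    set e : S := (et : S) with hedef
    obtain ⟨n, hn⟩ : ∃ n, g n = e := by
      have : e ∈ Set.range g := hgA ▸ hetA
      exact this
    have he : e * e = e := et.2
    -- height of x is positive
    have hr : 0 < hgt ρ e (piE h4 h5 x) :=
      hgt_pos_of_interior ρ e hρ (by exact hint)
    set r := hgt ρ e (piE h4 h5 x) with hrdef
    -- e ≤ π x
    have hex : e * (x * x⁻¹) = e := hgt_memUp_of_pos ρ e hρ hr
    have hexH : (e * x) * (e * x)⁻¹ = e := lem_eH h4 h5 e he hex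
    have hxeH : (x * e) * (x * e)⁻¹ = e := by
      rw [cs_idem_central h4 h5 he x]; exact hexH
    -- x * e lies in the interior of U
    have hxeU : x * e ∈ interior U := hetU
    -- neighborhood in the subgroup of elements multiplying into U
    have hNmem : {a : S | a * (x * e) ∈ interior U} ∩ (cliffordProj ⁻¹' {e}) ∈
        nhdsWithin e (cliffordProj ⁻¹' {e}) := by
      refine mem_nhdsWithin.2 ⟨{a : S | a * (x * e) ∈ interior U},
        isOpen_interior.preimage (continuous_id.mul continuous_const), ?_, fun a ha => ⟨ha.1, ha.2⟩⟩
      show e * (x * e) ∈ interior U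
      rw [cs_left_id h4 h5 hxeH]
      exact hxeU
    obtain ⟨m', hm'⟩ := hV6 n _ (hn.symm ▸ hNmem)
    rw [hn] at hm'
    -- ρ-ball inside W
    obtain ⟨δ, hδ, hδsub⟩ := (cm_mem_nhds_iff hρ).1 hW1
    -- choose k large
    obtain ⟨k₁, hk₁⟩ := exists_pow_lt_of_lt_one hδ (show (4:ℝ)⁻¹ < 1 by norm_num)
    obtain ⟨k₂, hk₂⟩ := exists_pow_lt_of_lt_one (show (0:ℝ) < r/2 by linarith)
      (show (4:ℝ)⁻¹ < 1 by norm_num)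
    set k := max (max (n+1) (m'+1)) (max k₁ k₂) with hkdef
    have hkn : n < k := by
      have := le_max_left (max (n+1) (m'+1)) (max k₁ k₂)
      have := le_max_left (n+1) (m'+1)
      omega
    have hkm' : m' ≤ k := by
      have h1 := le_max_left (max (n+1) (m'+1)) (max k₁ k₂)
      have h2 := le_max_right (n+1) (m'+1)
      omega
    have hpowk : ∀ j, k₁ ≤ j ∨ k₂ ≤ j → ((4:ℝ)⁻¹)^j ≤ ((4:ℝ)⁻¹)^k₁ ∨
        ((4:ℝ)⁻¹)^j ≤ ((4:ℝ)⁻¹)^k₂ := by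
      intro j hj
      rcases hj with hj | hj
      · left; exact pow_le_pow_of_le_one (by norm_num) (by norm_num) hj
      · right; exact pow_le_pow_of_le_one (by norm_num) (by norm_num) hj
    have hkδ : ((4:ℝ)⁻¹)^k < δ := by
      have h1 : k₁ ≤ k := by
        have := le_max_right (max (n+1) (m'+1)) (max k₁ k₂)
        have := le_max_left k₁ k₂
        omega
      exact lt_of_le_of_lt (pow_le_pow_of_le_one (by norm_num) (by norm_num) h1) hk₁
    have hkr : ((4:ℝ)⁻¹)^k < r/2 := by
      have h1 : k₂ ≤ k := by
        have := le_max_right (max (n+1) (m'+1)) (max k₁ k₂)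
        have := le_max_right k₁ k₂
        omega
      exact lt_of_le_of_lt (pow_le_pow_of_le_one (by norm_num) (by norm_num) h1) hk₂
    refine ⟨k, ?_⟩
    intro y hy
    have hyU : (x, y) ∈ UU n k := (hTmem k (x, y)).1 hy n hkn
    change (x, y) ∈ UeSet h4 h5 ρ (g n) (VV n k) k at hyU
    rw [hn] at hyU
    obtain ⟨r1, g1⟩ := hyU
    have hpos : (0:ℝ) < ((4:ℝ)⁻¹)^k := by positivity
    -- the guard fires
    have hgx : ((4:ℝ)⁻¹)^k < hgt ρ e (piE h4 h5 x) := by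
      rw [← hrdef]; linarith
    have hgy : ((4:ℝ)⁻¹)^k < hgt ρ e (piE h4 h5 y) := by
      have hlip := hgt_lip ρ e hρ (piE h4 h5 x) (piE h4 h5 y)
      rw [← hrdef] at hlip
      linarith
    have hgmem : (e * x) * (e * y)⁻¹ ∈ VV n k := g1 (lt_min_iff.2 ⟨hgx, hgy⟩)
    have hgmem' : (e * x) * (e * y)⁻¹ ∈ VV n m' := hVmono n hkm' hgmem
    have hwmem : (e * y) * (e * x)⁻¹ ∈ VV n m' := by
      have h1 := hV3 n m' _ hgmem'
      have heq : ((e * x) * (e * y)⁻¹)⁻¹ = (e * y) * (e * x)⁻¹ := by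
        rw [cs_mul_inv_rev h4 h5, cs_inv_inv h4 h5]
      rwa [heq] at h1
    -- y * e belongs to U
    have heyG : e * (y * y⁻¹) = e := hgt_memUp_of_pos ρ e hρ (lt_trans hpos hgy)
    have heyH : (e * y) * (e * y)⁻¹ = e := lem_eH h4 h5 e he heyG
    have hprod : ((e * y) * (e * x)⁻¹) * (x * e) = e * y := by
      rw [cs_idem_central h4 h5 he x]
      calc ((e * y) * (e * x)⁻¹) * (e * x) = (e * y) * ((e * x)⁻¹ * (e * x)) := by
            simp only [mul_assoc]
      _ = (e * y) * e := by rw [cs_inv_mul h4 h5 hexH]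
      _ = e * y := cs_right_id h4 h5 heyH
    have hyeU : y * e ∈ U := by
      have h1 : ((e * y) * (e * x)⁻¹) * (x * e) ∈ interior U := (hm' hwmem).1
      rw [hprod] at h1
      have h2 : y * e = e * y := cs_idem_central h4 h5 he y
      rw [h2]
      exact interior_subset h1
    -- π y ∈ W
    have hyπW : cliffordProj y ∈ W := by
      have h1 : ρ (piE h4 h5 x) (piE h4 h5 y) < δ := lt_trans r1 hkδ
      exact hδsub h1
    -- apply the division property
    refine hdiv ⟨⟨y * e, hyeU, e, hetW, rfl⟩, hyπW⟩
  -- separation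
  have hsep : ∀ x y : S, x ≠ y → ∃ k, (x, y) ∉ T k := by
    intro x y hxy
    have hO : {y}ᶜ ∈ nhds x := compl_singleton_mem_nhds hxy
    obtain ⟨k, hk⟩ := hbase x _ hO
    refine ⟨k, fun hmem => ?_⟩
    exact hk hmem rfl
  -- the metric
  set d : S → S → ℝ := chainDist T Trefl Tsymm Tanti T0 with hd
  have hle : ∀ x y, d x y ≤ (preD T x y : ℝ) := chainDist_le_preD T Trefl Tsymm Tanti T0
  have hge : ∀ x y, (preD T x y : ℝ) ≤ 2 * d x y :=
    preD_le_two_chainDist T Trefl Tsymm Tanti T0 Tcube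
  have hnn : ∀ x y, 0 ≤ d x y := chainDist_nonneg T Trefl Tsymm Tanti T0
  refine ⟨d, ⟨?_, ?_, ?_, ?_⟩, ?_, ?_⟩
  · -- separation
    intro x y
    constructor
    · intro h0
      by_contra hxy
      obtain ⟨k, hk⟩ := hsep x y hxy
      have h1 : (preD T x y : ℝ) ≤ 0 := by
        have := hge x y
        rw [h0] at this
        linarith
      have h2 : preD T x y = 0 := by
        have := (preD T x y).2
        exact NNReal.coe_eq_zero.1 (le_antisymm h1 (preD T x y).2)
      have h3 : (x, y) ∈ T k := (preD_eq_zero_iff T Tanti T0).1 h2 k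
      exact hk h3
    · intro h
      rw [h]
      exact chainDist_self T Trefl Tsymm Tanti T0 y
  · exact chainDist_comm T Trefl Tsymm Tanti T0
  · exact chainDist_triangle T Trefl Tsymm Tanti T0
  · -- topology
    intro s
    constructor
    · intro hs x hx
      obtain ⟨k, hk⟩ := hbase x s (hs.mem_nhds hx)
      refine ⟨(2⁻¹:ℝ) ^ (k+1), by positivity, ?_⟩
      intro y hy
      simp only [Set.mem_setOf_eq] at hy
      have h1 : (preD T x y : ℝ) < (2⁻¹:ℝ) ^ k := by
        have h2 := hge x y
        have : 2 * d x y < 2 * (2⁻¹:ℝ)^(k+1) := by linarith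
        have h3 : 2 * (2⁻¹:ℝ)^(k+1) = (2⁻¹:ℝ)^k := by
          rw [pow_succ]; ring
        linarith
      have h4 : preD T x y ≤ (2⁻¹:ℝ≥0) ^ k := by
        rw [← NNReal.coe_le_coe]
        push_cast
        exact le_of_lt h1
      exact hk ((preD_le_pow_iff T Tanti T0).1 h4)
    · intro hb
      rw [isOpen_iff_mem_nhds]
      intro x hx
      obtain ⟨ε, hε, hsub⟩ := hb x hx
      obtain ⟨k, hk⟩ := exists_pow_lt_of_lt_one hε (show (2:ℝ)⁻¹ < 1 by norm_num)
      refine Filter.mem_of_superset (Tnbhd k x) ?_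
      intro y hy
      refine hsub ?_
      show d x y < ε
      have h1 : preD T x y ≤ (2⁻¹:ℝ≥0) ^ k := (preD_le_pow_iff T Tanti T0).2 hy
      have h2 : (preD T x y : ℝ) ≤ (2⁻¹:ℝ) ^ k := by
        have := NNReal.coe_le_coe.2 h1
        push_cast at this
        exact this
      have := hle x y
      linarith
  · -- subinvariance
    intro x y z
    refine max_le ?_ ?_
    · exact chainDist_map_le T Trefl Tsymm Tanti T0 (fun a => z * a)
        (fun k p hp => Tleft z k p hp) x y
    · exact chainDist_map_le T Trefl Tsymm Tanti T0 (fun a => a * z)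
        (fun k p hp => Tright z k p hp) x y
  · -- inversion invariance
    intro x y
    have h1 : d x⁻¹ y⁻¹ ≤ d x y :=
      chainDist_map_le T Trefl Tsymm Tanti T0 (fun a => a⁻¹)
        (fun k p hp => Tinv k p hp) x y
    have h2 : d x y ≤ d x⁻¹ y⁻¹ := by
      have h3 := chainDist_map_le T Trefl Tsymm Tanti T0 (fun a => a⁻¹)
        (fun k p hp => Tinv k p hp) x⁻¹ y⁻¹
      rw [cs_inv_inv h4 h5 x, cs_inv_inv h4 h5 y] at h3
      exact h3
    linarith

end Backward

section Forward
open scoped NNReal Classical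
open Filter

theorem forward_dir (S : Type u) [Semigroup S] [TopologicalSpace S] [Inv S]
    (hS : IsTopologicalCliffordSemigroup S)
    (A : Set S) (hAE : A ⊆ idempotents S)
    (d : S → S → ℝ) (hd : IsCompatibleMetric d)
    (hsub : ∀ x y z : S, max (d (z * x) (z * y)) (d (x * z) (y * z)) ≤ d x y)
    (hinv : ∀ x y : S, d x y = d x⁻¹ y⁻¹) :
    (∃ ρ : ↥(idempotents S) → ↥(idempotents S) → ℝ, IsCompatibleMetric ρ ∧
      ∀ (x y z : ↥(idempotents S))
        (hzx : (z : S) * (x : S) ∈ idempotents S)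
        (hzy : (z : S) * (y : S) ∈ idempotents S),
          ρ ⟨(z : S) * (x : S), hzx⟩ ⟨(z : S) * (y : S), hzy⟩ ≤ ρ x y) ∧
    ∀ e ∈ A, FirstCountableTopology ↥(cliffordProj ⁻¹' {e} : Set S) ∧
      IsBalancedMaximalSubgroup S e := by
  obtain ⟨hT2, hCM, hInv, h4, h5⟩ := hS
  haveI := hT2
  haveI := hCM
  have dleft : ∀ z a b : S, d (z * a) (z * b) ≤ d a b :=
    fun z a b => le_trans (le_max_left _ _) (hsub a b z)
  have dright : ∀ z a b : S, d (a * z) (b * z) ≤ d a b :=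
    fun z a b => le_trans (le_max_right _ _) (hsub a b z)
  -- S is first countable
  haveI hFCS : FirstCountableTopology S := by
    constructor
    intro x
    have hbasis : (nhds x).HasBasis (fun _ : ℕ => True)
        (fun n => {y : S | d x y < 1 / (n + 1)}) := by
      rw [Filter.hasBasis_iff]
      intro t
      constructor
      · intro ht
        obtain ⟨ε, hε, hsubb⟩ := (cm_mem_nhds_iff hd).1 ht
        obtain ⟨n, hn⟩ := exists_nat_one_div_lt hε
        refine ⟨n, trivial, ?_⟩
        intro y hy
        exact hsubb (lt_trans hy hn)
      · rintro ⟨n, _, hsubb⟩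
        refine Filter.mem_of_superset (cm_ball_mem_nhds hd x ?_) hsubb
        positivity
    exact hbasis.isCountablyGenerated
  constructor
  · -- the restricted metric on the semilattice
    refine ⟨fun f g => d (f : S) (g : S), ⟨?_, ?_, ?_, ?_⟩, ?_⟩
    · intro f g
      rw [hd.1]
      exact ⟨Subtype.ext, fun h => by rw [h]⟩
    · intro f g
      exact hd.2.1 _ _
    · intro f g h
      exact hd.2.2.1 _ _ _
    · intro s
      constructor
      · intro hs x hx
        obtain ⟨t, hto, hteq⟩ := isOpen_induced_iff.1 hs
        obtain ⟨ε, hε, hball⟩ := (hd.2.2.2 t).1 hto (x : S) (by rw [← hteq] at hx; exact hx)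
        refine ⟨ε, hε, ?_⟩
        intro y hy
        rw [← hteq]
        exact hball hy
      · intro hcond
        choose ε hε hballs using hcond
        rw [isOpen_induced_iff]
        refine ⟨⋃ (x : ↥(idempotents S)) (hx : x ∈ s), {z : S | d (x : S) z < ε x hx},
          isOpen_iUnion fun x => isOpen_iUnion fun hx => cm_ball_open hd _ _, ?_⟩
        ext y
        simp only [Set.mem_preimage, Set.mem_iUnion, Set.mem_setOf_eq]
        constructor
        · rintro ⟨x, hx, hxy⟩
          exact hballs x hx hxy
        · intro hy
          exact ⟨y, hy, by rw [cm_self hd]; exact hε y hy⟩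
    · intro x y z hzx hzy
      exact dleft (z : S) (x : S) (y : S)
  · -- the subgroups
    intro e heA
    have he : e * e = e := hAE heA
    have heH : cliffordProj e = e := cs_idem_proj h4 h5 he
    constructor
    · exact TopologicalSpace.Subtype.firstCountableTopology _
    · -- balanced
      intro U hUH hU
      obtain ⟨Q, hQo, heQ, hQsub⟩ := mem_nhdsWithin.1 hU
      obtain ⟨ε, hε, hball⟩ := (hd.2.2.2 Q).1 hQo e heQ
      set H : Set S := cliffordProj ⁻¹' {e} with hHdef
      set V : Set S := {v | d e v < ε} ∩ H with hV
      have conj_est : ∀ x v : S, x ∈ H → v ∈ V → x * v * x⁻¹ ∈ V := by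
        intro x v hx hv
        have hxH : x * x⁻¹ = e := hx
        have hvH : v * v⁻¹ = e := hv.2
        have hxiH : x⁻¹ * x⁻¹⁻¹ = e := cs_inv_mem h4 h5 hxH
        refine ⟨?_, ?_⟩
        · show d e (x * v * x⁻¹) < ε
          have key : d (x * v * x⁻¹) e ≤ d v e := by
            have e1 : (x * e) * x⁻¹ = e := by
              rw [cs_right_id h4 h5 hxH, hxH]
            calc d (x * v * x⁻¹) e = d ((x * v) * x⁻¹) ((x * e) * x⁻¹) := by rw [e1]
            _ ≤ d (x * v) (x * e) := dright x⁻¹ _ _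
            _ ≤ d v e := dleft x _ _
          have := hd.2.1 e (x * v * x⁻¹)
          have h2 := hd.2.1 v e
          have h3 : d v e < ε := by
            have := hd.2.1 e v
            have hv1 := hv.1
            simp only [Set.mem_setOf_eq] at hv1
            linarith
          linarith
        · exact cs_mul_mem h4 h5 (cs_mul_mem h4 h5 hxH hvH) hxiH
      refine ⟨V, ?_, ?_, ?_⟩
      · -- V ⊆ U
        rintro v ⟨hv1, hv2⟩
        exact hQsub ⟨hball hv1, hv2⟩
      · refine mem_nhdsWithin.2 ⟨{v | d e v < ε}, cm_ball_open hd e ε, ?_,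
          fun a ha => ⟨ha.1, ha.2⟩⟩
        show d e e < ε
        rw [cm_self hd]
        exact hε
      · intro x' hx'
        have hx'H : x' * x'⁻¹ = e := hx'
        apply Set.Subset.antisymm
        · rintro w ⟨v, hv, rfl⟩
          exact conj_est x' v hx' hv
        · intro v hv
          have hvH : v * v⁻¹ = e := hv.2
          refine ⟨x'⁻¹ * v * x', ?_, ?_⟩
          · have h1 : x'⁻¹ * v * x'⁻¹⁻¹ ∈ V := conj_est x'⁻¹ v (cs_inv_mem h4 h5 hx'H) hv
            rwa [cs_inv_inv h4 h5 x'] at h1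
          · show x' * (x'⁻¹ * v * x') * x'⁻¹ = v
            have hev : e * v = v := cs_left_id h4 h5 hvH
            have hve : v * e = v := cs_right_id h4 h5 hvH
            calc x' * (x'⁻¹ * v * x') * x'⁻¹
                = (x' * x'⁻¹) * (v * (x' * x'⁻¹)) := by simp only [mul_assoc]
            _ = e * (v * e) := by rw [hx'H]
            _ = v := by rw [hve, hev]
  
end Forward

/-- Let `S` be a ditopological Clifford semigroup whose maximal semilattice `E` is a
U-semilattice, and let `A` be a countable U-dense subset of `E`. Then `S` is
metrizable by a subinvariant metric (a compatible metric `d` with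
`max {d(zx,zy), d(xz,yz)} ≤ d(x,y) = d(x⁻¹,y⁻¹)`) if and only if `E` is metrizable by
a subinvariant metric and every maximal subgroup `H_e = π⁻¹(e)`, `e ∈ A`, is first
countable and balanced. -/
theorem metrizable_subinvariant_iff_of_ditopological_clifford_uSemilattice
    (S : Type u) [Semigroup S] [TopologicalSpace S] [Inv S]
    (hS : IsTopologicalCliffordSemigroup S) (hdi : Ditopological S)
    (hU : IdempotentsAreUSemilattice S)
    (A : Set S) (hAE : A ⊆ idempotents S) (hAc : A.Countable)
    (hAdense : IsUDenseInIdempotents S A) :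
    (∃ d : S → S → ℝ, IsCompatibleMetric d ∧
        (∀ x y z : S, max (d (z * x) (z * y)) (d (x * z) (y * z)) ≤ d x y) ∧
        (∀ x y : S, d x y = d x⁻¹ y⁻¹)) ↔
      ((∃ ρ : ↥(idempotents S) → ↥(idempotents S) → ℝ, IsCompatibleMetric ρ ∧
          ∀ (x y z : ↥(idempotents S))
            (hzx : (z : S) * (x : S) ∈ idempotents S)
            (hzy : (z : S) * (y : S) ∈ idempotents S),
              ρ ⟨(z : S) * (x : S), hzx⟩ ⟨(z : S) * (y : S), hzy⟩ ≤ ρ x y) ∧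
        ∀ e ∈ A, FirstCountableTopology ↥(cliffordProj ⁻¹' {e}) ∧
          IsBalancedMaximalSubgroup S e) := by
  constructor
  · rintro ⟨d, hd, hsubv, hinvv⟩
    exact forward_dir S hS A hAE d hd hsubv hinvv
  · rintro ⟨⟨ρ, hρ, hρsub⟩, hgrp⟩
    exact backward_dir S hS hdi A hAE hAc hAdense ρ hρ hρsub hgrp
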